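/- arXiv:1601.03981 — 4 statements merged into one kernel-verified Lean document; each statement's English description precedes it below -/
import Mathlib

section
/- Let A ⊆ 𝔽_q with 0 ∉ A and |A| > q^{2/3}. Then there exists a ∈ A such that |A(a + A)| > q/2, where A(a+A) = {b(a+c) : b, c ∈ A}. -/
open Finset

lemma key_ineq (x y : ℝ) (hx : 3 ≤ x) (hxy : x + 1 ≤ y) (hc : y^2 + 1 ≤ x^3) :
    y*(y-1)^2 + y*(y-1)*(x-1)^2 < y*(y-x)*x^2 + 2*(y-1)*x*(x-1)^2 := by
  nlinarith [sq_nonneg (x-3), sq_nonneg (y-x), sq_nonneg (x*y - y), sq_nonneg x, sq_nonneg y,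
    mul_pos (by linarith : (0:ℝ) < x) (by linarith : (0:ℝ) < y), sq_nonneg (x^2 - y),
    sq_nonneg (x*(x-1) - y)]


lemma fiber_card {F : Type*} [Field F] [Fintype F] [DecidableEq F] (q : ℕ)
    (hq : Fintype.card F = q) (b c b' c' : F) (hb : b ≠ 0) (hb' : b' ≠ 0) :
    (univ.filter fun a : F => b*(a+c) = b'*(a+c') ∧ b*(a+c) ≠ 0).card
      = if b = b' then (if c = c' then q - 1 else 0) else (if c = c' then 0 else 1) := by
  by_cases hbb : b = b'
  · subst hbb
    by_cases hcc : c = c'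
    · subst hcc
      rw [if_pos rfl, if_pos rfl]
      have heq : (univ.filter fun a : F => b*(a+c) = b*(a+c) ∧ b*(a+c) ≠ 0)
          = univ.erase (-c) := by
        ext a
        simp only [mem_filter, mem_univ, true_and, mem_erase, and_true]
        constructor
        · intro h2 ha
          subst ha
          exact h2 (by ring)
        · intro ha hcon
          rcases mul_eq_zero.1 hcon with h | h
          · exact absurd h hb
          · exact ha (by linear_combination h)
      rw [heq, card_erase_of_mem (mem_univ _), card_univ, hq]
    · rw [if_pos rfl, if_neg hcc, card_eq_zero, filter_eq_empty_iff]
      rintro a - ⟨h1, -⟩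
      exact hcc (by linear_combination (mul_left_cancel₀ hb h1))
  · by_cases hcc : c = c'
    · subst hcc
      rw [if_neg hbb, if_pos rfl, card_eq_zero, filter_eq_empty_iff]
      rintro a - ⟨h1, h2⟩
      have hac : a + c ≠ 0 := fun h => h2 (by rw [h, mul_zero])
      exact hbb (mul_right_cancel₀ hac h1)
    · rw [if_neg hbb, if_neg hcc]
      have hd : b - b' ≠ 0 := sub_ne_zero.2 hbb
      have heq : (univ.filter fun a : F => b*(a+c) = b'*(a+c') ∧ b*(a+c) ≠ 0)
          = {(b'*c' - b*c)/(b-b')} := by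
        ext a
        simp only [mem_filter, mem_univ, true_and, mem_singleton]
        constructor
        · rintro ⟨h1, -⟩
          field_simp
          linear_combination h1
        · intro ha
          subst ha
          constructor
          · field_simp
            ring
          · intro hcon
            rcases mul_eq_zero.1 hcon with h | h
            · exact hb h
            · apply hcc
              have h2 : b'*c' - b*c + c*(b-b') = 0 := by
                field_simp at h
                linear_combination h
              have h3 : b' * c' = b' * c := by linear_combination h2
              exact (mul_left_cancel₀ hb' h3).symm
      rw [heq, card_singleton]

lemma sum_Q {F : Type*} [Field F] [Fintype F] [DecidableEq F] (q : ℕ)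
    (hq : Fintype.card F = q) (A : Finset F) (h0 : (0:F) ∉ A) :
    ∑ a : F, (((A ×ˢ A) ×ˢ (A ×ˢ A)).filter fun z =>
        z.1.1*(a+z.1.2) = z.2.1*(a+z.2.2) ∧ z.1.1*(a+z.1.2) ≠ 0).card
      = A.card^2 * ((q-1) + (A.card-1)^2) := by
  have hAne : ∀ x ∈ A, x ≠ (0:F) := fun x hx h => h0 (h ▸ hx)
  simp_rw [card_filter]
  rw [Finset.sum_comm]
  have step : ∀ z ∈ (A ×ˢ A) ×ˢ (A ×ˢ A),
      (∑ a : F, if (z.1.1*(a+z.1.2) = z.2.1*(a+z.2.2) ∧ z.1.1*(a+z.1.2) ≠ 0) then 1 else 0)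
      = if z.1.1 = z.2.1 then (if z.1.2 = z.2.2 then q-1 else 0)
        else (if z.1.2 = z.2.2 then 0 else 1) := by
    rintro ⟨⟨b,c⟩,⟨b',c'⟩⟩ hz
    simp only [mem_product] at hz
    rw [← Finset.card_filter]
    exact fiber_card q hq b c b' c' (hAne b hz.1.1) (hAne b' hz.2.1)
  rw [Finset.sum_congr rfl step, Finset.sum_product]
  have inner : ∀ p ∈ A ×ˢ A, (∑ p' ∈ A ×ˢ A,
      if (p : F × F).1 = p'.1 then (if p.2 = p'.2 then q-1 else 0)
      else (if p.2 = p'.2 then 0 else 1)) = (q-1) + (A.card-1)^2 := by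
    rintro ⟨b,c⟩ hp
    simp only [mem_product] at hp
    rw [Finset.sum_product]
    rw [← Finset.add_sum_erase _ _ hp.1]
    congr 1
    · have h1 : ∀ c' ∈ A, (if b = b then (if c = c' then q-1 else 0)
          else (if c = c' then (0:ℕ) else 1)) = if c = c' then q-1 else 0 :=
        fun c' _ => if_pos rfl
      rw [Finset.sum_congr rfl h1, Finset.sum_ite_eq A c (fun _ => q - 1), if_pos hp.2]
    · have hrow : ∀ b' ∈ A.erase b, (∑ c' ∈ A,
          if b = b' then (if c = c' then q-1 else 0) else (if c = c' then 0 else 1))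
          = A.card - 1 := by
        intro b' hb'
        have : b ≠ b' := fun h => (mem_erase.1 hb').1 h.symm
        have h2 : ∀ c' ∈ A, (if b = b' then (if c = c' then q-1 else 0)
            else (if c = c' then (0:ℕ) else 1)) = if c = c' then 0 else 1 :=
          fun c' _ => if_neg this
        rw [Finset.sum_congr rfl h2, ← Finset.add_sum_erase _ _ hp.2, if_pos rfl]
        have h3 : ∀ c' ∈ A.erase c, (if c = c' then (0:ℕ) else 1) = 1 := by
          intro c' hc'
          exact if_neg (fun h => (mem_erase.1 hc').1 h.symm)
        rw [Finset.sum_congr rfl h3, Finset.sum_const, card_erase_of_mem hp.2,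
          smul_eq_mul, mul_one, zero_add]
      rw [Finset.sum_congr rfl hrow, Finset.sum_const, card_erase_of_mem hp.1,
        smul_eq_mul, sq]
  rw [Finset.sum_congr rfl inner, Finset.sum_const, card_product, smul_eq_mul, ← sq]


lemma per_a {F : Type*} [Field F] [Fintype F] [DecidableEq F]
    (A : Finset F) (h0 : (0:F) ∉ A) (a : F) :
    (A.card * (A.filter fun c => a + c ≠ 0).card)^2
      ≤ (((A ×ˢ A).image fun p : F × F => p.1*(a+p.2)).erase 0).card *
        (((A ×ˢ A) ×ˢ (A ×ˢ A)).filter fun z =>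
          z.1.1*(a+z.1.2) = z.2.1*(a+z.2.2) ∧ z.1.1*(a+z.1.2) ≠ 0).card := by
  classical
  set S' : Finset F := ((A ×ˢ A).image fun p : F × F => p.1*(a+p.2)).erase 0 with hS'
  set N : F → ℕ := fun t => ((A ×ˢ A).filter fun p : F × F => p.1*(a+p.2) = t).card with hN
  -- the filtered product
  have hfp : (A ×ˢ A).filter (fun p : F × F => p.1*(a+p.2) ≠ 0)
      = A ×ˢ (A.filter fun c => a + c ≠ 0) := by
    ext p
    simp only [mem_filter, mem_product]
    constructor
    · rintro ⟨⟨h1, h2⟩, h3⟩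
      exact ⟨h1, h2, fun h => h3 (by rw [h, mul_zero])⟩
    · rintro ⟨h1, h2, h3⟩
      exact ⟨⟨h1, h2⟩, mul_ne_zero (fun h => h0 (h ▸ h1)) h3⟩
  -- sum of fibers
  have hsum : ∑ t ∈ S', N t = A.card * (A.filter fun c => a + c ≠ 0).card := by
    have hmaps : ∀ p ∈ (A ×ˢ A).filter (fun p : F × F => p.1*(a+p.2) ≠ 0),
        p.1*(a+p.2) ∈ S' := by
      intro p hp
      rw [mem_filter] at hp
      exact mem_erase.2 ⟨hp.2, mem_image.2 ⟨p, hp.1, rfl⟩⟩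
    have hcard := Finset.card_eq_sum_card_fiberwise hmaps
    have hstep : ∑ t ∈ S', N t = ((A ×ˢ A).filter (fun p : F × F => p.1*(a+p.2) ≠ 0)).card := by
      rw [hcard]
      apply Finset.sum_congr rfl
      intro t ht
      have ht0 : t ≠ 0 := (mem_erase.1 ht).1
      show ((A ×ˢ A).filter fun p : F × F => p.1*(a+p.2) = t).card = _
      rw [Finset.filter_filter]
      congr 1
      apply Finset.filter_congr
      intro p _
      constructor
      · intro h2; exact ⟨by rw [h2]; exact ht0, h2⟩
      · intro h2; exact h2.2
    rw [hstep, hfp, card_product]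
  -- quadruple count as sum of squared fibers
  have hQ : (((A ×ˢ A) ×ˢ (A ×ˢ A)).filter fun z =>
        z.1.1*(a+z.1.2) = z.2.1*(a+z.2.2) ∧ z.1.1*(a+z.1.2) ≠ 0).card
      = ∑ t ∈ S', (N t)^2 := by
    have hmaps : ∀ z ∈ ((A ×ˢ A) ×ˢ (A ×ˢ A)).filter (fun z : (F×F)×(F×F) =>
        z.1.1*(a+z.1.2) = z.2.1*(a+z.2.2) ∧ z.1.1*(a+z.1.2) ≠ 0),
        z.1.1*(a+z.1.2) ∈ S' := by
      intro z hz
      rw [mem_filter, mem_product] at hz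
      exact mem_erase.2 ⟨hz.2.2, mem_image.2 ⟨z.1, hz.1.1, rfl⟩⟩
    rw [Finset.card_eq_sum_card_fiberwise hmaps]
    apply Finset.sum_congr rfl
    intro t ht
    have ht0 : t ≠ 0 := (mem_erase.1 ht).1
    have hfib : (((A ×ˢ A) ×ˢ (A ×ˢ A)).filter (fun z : (F×F)×(F×F) =>
        z.1.1*(a+z.1.2) = z.2.1*(a+z.2.2) ∧ z.1.1*(a+z.1.2) ≠ 0)).filter
          (fun z => z.1.1*(a+z.1.2) = t)
        = ((A ×ˢ A).filter fun p : F × F => p.1*(a+p.2) = t) ×ˢ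
          ((A ×ˢ A).filter fun p : F × F => p.1*(a+p.2) = t) := by
      ext z
      simp only [Finset.filter_filter, mem_filter, mem_product]
      constructor
      · rintro ⟨⟨h1, h2⟩, ⟨h3, h4⟩, h5⟩
        exact ⟨⟨h1, h5⟩, h2, h5 ▸ h3.symm⟩
      · rintro ⟨⟨h1, h5⟩, h2, h6⟩
        exact ⟨⟨h1, h2⟩, ⟨h5.trans h6.symm, fun hz => ht0 (hz ▸ h5.symm ▸ rfl)⟩, h5⟩
    rw [hfib, card_product, sq]
  rw [hQ, ← hsum]
  exact sq_sum_le_card_mul_sum_sq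


lemma na_lb {F : Type*} [Field F] [Fintype F] [DecidableEq F]
    (A : Finset F) (a : F) : A.card - 1 ≤ (A.filter fun c => a + c ≠ 0).card := by
  have hsub : A.erase (-a) ⊆ A.filter fun c => a + c ≠ 0 := by
    intro c hc
    rw [mem_erase] at hc
    rw [mem_filter]
    exact ⟨hc.2, fun h => hc.1 (by linear_combination h)⟩
  exact le_trans (Finset.pred_card_le_card_erase) (Finset.card_le_card hsub)

lemma na_total {F : Type*} [Field F] [Fintype F] [DecidableEq F] (q : ℕ)
    (hq : Fintype.card F = q) (A : Finset F) :
    (q - A.card) * (A.card * A.card)^2 + A.card * (A.card * (A.card-1))^2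
      ≤ ∑ a : F, (A.card * (A.filter fun c => a + c ≠ 0).card)^2 := by
  classical
  set B : Finset F := A.image (fun c => -c) with hB
  have hBcard : B.card = A.card := Finset.card_image_of_injective _ neg_injective
  have hBsub : B ⊆ univ := subset_univ B
  rw [← Finset.sum_sdiff hBsub]
  have h1 : ∀ a ∈ univ \ B, (A.card * (A.filter fun c => a + c ≠ 0).card)^2
      = (A.card * A.card)^2 := by
    intro a ha
    rw [mem_sdiff] at ha
    congr 2
    congr 1
    rw [Finset.filter_true_of_mem]
    intro c hc hcon
    exact ha.2 (mem_image.2 ⟨c, hc, by linear_combination -hcon⟩)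
  rw [Finset.sum_congr rfl h1, Finset.sum_const, card_sdiff_of_subset hBsub, card_univ, hq,
    hBcard, smul_eq_mul]
  have h2 : ∀ a ∈ B, (A.card * (A.card-1))^2 ≤ (A.card * (A.filter fun c => a + c ≠ 0).card)^2 :=
    fun a _ => Nat.pow_le_pow_left (Nat.mul_le_mul_left _ (na_lb A a)) 2
  have h3 := Finset.sum_le_sum h2
  rw [Finset.sum_const, hBcard, smul_eq_mul] at h3
  omega

theorem pinned_A_times_a_plus_A
    {F : Type*} [Field F] [Fintype F] [DecidableEq F] (q : ℕ) (hq : Fintype.card F = q)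
    (A : Finset F) (h0 : (0 : F) ∉ A) (h : (A.card : ℝ) > (q : ℝ) ^ ((2 : ℝ) / 3)) :
    ∃ a ∈ A, (((A ×ˢ A).image (fun p : F × F => p.1 * (a + p.2))).card : ℝ)
      > (q : ℝ) / 2 := by
  classical
  by_contra hcon
  push_neg at hcon
  set n := A.card with hn
  set na : F → ℕ := fun a => (A.filter fun c => a + c ≠ 0).card with hna
  set E : F → ℕ := fun a => (((A ×ˢ A) ×ˢ (A ×ˢ A)).filter fun z =>
    z.1.1*(a+z.1.2) = z.2.1*(a+z.2.2) ∧ z.1.1*(a+z.1.2) ≠ 0).card with hE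
  have hq2 : 2 ≤ q := by rw [← hq]; exact Fintype.one_lt_card
  -- n + 1 ≤ q
  have hnq : n + 1 ≤ q := by
    have hsub : A ⊆ univ.erase 0 := fun x hx => mem_erase.2 ⟨fun h => h0 (h ▸ hx), mem_univ x⟩
    have := Finset.card_le_card hsub
    rw [card_erase_of_mem (mem_univ _), card_univ, hq] at this
    omega
  -- cube inequality
  have hcube : q^2 + 1 ≤ n^3 := by
    have h1 : (0:ℝ) ≤ (q:ℝ)^((2:ℝ)/3) := Real.rpow_nonneg (Nat.cast_nonneg q) _
    have h2 : ((q:ℝ)^((2:ℝ)/3))^(3:ℕ) = (q:ℝ)^(2:ℕ) := by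
      rw [← Real.rpow_natCast ((q:ℝ)^((2:ℝ)/3)) 3, ← Real.rpow_mul (Nat.cast_nonneg q),
        ← Real.rpow_natCast (q:ℝ) 2]
      norm_num
    have h3 : (q:ℝ)^(2:ℕ) < (n:ℝ)^(3:ℕ) := by
      rw [← h2]
      exact pow_lt_pow_left₀ h h1 (by norm_num)
    have h4 : q^2 < n^3 := by exact_mod_cast h3
    omega
  have hn3 : 3 ≤ n := by
    by_contra hh
    push_neg at hh
    interval_cases n <;> nlinarith [hcube, hnq]
  have hq4 : 4 ≤ q := by omega
  -- pointwise bounds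
  have HA : ∀ a ∈ A, (q-1) * (2 * ((n * na a)^2)) ≤ (q-1) * (q * E a) := by
    intro a ha
    have hCS := per_a A h0 a
    have hS : 2 * (((A ×ˢ A).image fun p : F × F => p.1*(a+p.2)).erase 0).card ≤ q := by
      have h3 := hcon a ha
      have h4 : (((A ×ˢ A).image fun p : F × F => p.1*(a+p.2)).erase 0).card
          ≤ ((A ×ˢ A).image fun p : F × F => p.1*(a+p.2)).card := Finset.card_erase_le
      have h5 : (2 * ((A ×ˢ A).image fun p : F × F => p.1*(a+p.2)).card : ℝ) ≤ q := by
        linarith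
      have h6 : 2 * ((A ×ˢ A).image fun p : F × F => p.1*(a+p.2)).card ≤ q := by
        exact_mod_cast h5
      omega
    apply Nat.mul_le_mul_left
    calc 2 * ((n * na a)^2)
        ≤ 2 * ((((A ×ˢ A).image fun p : F × F => p.1*(a+p.2)).erase 0).card * E a) :=
          Nat.mul_le_mul_left _ hCS
      _ = (2 * (((A ×ˢ A).image fun p : F × F => p.1*(a+p.2)).erase 0).card) * E a := by ring
      _ ≤ q * E a := Nat.mul_le_mul_right _ hS
  have HC : ∀ a ∈ univ \ A, q * ((n * na a)^2) ≤ q * ((q-1) * E a) := by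
    intro a _
    have hCS := per_a A h0 a
    have hS : (((A ×ˢ A).image fun p : F × F => p.1*(a+p.2)).erase 0).card ≤ q - 1 := by
      have hsub : ((A ×ˢ A).image fun p : F × F => p.1*(a+p.2)).erase 0 ⊆ univ.erase 0 :=
        Finset.erase_subset_erase _ (subset_univ _)
      have := Finset.card_le_card hsub
      rw [card_erase_of_mem (mem_univ _), card_univ, hq] at this
      exact this
    apply Nat.mul_le_mul_left
    calc (n * na a)^2
        ≤ (((A ×ˢ A).image fun p : F × F => p.1*(a+p.2)).erase 0).card * E a := hCS
      _ ≤ (q-1) * E a := Nat.mul_le_mul_right _ hS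
  -- summed upper bound
  have Hsplit : ∑ a ∈ univ \ A, E a + ∑ a ∈ A, E a = ∑ a : F, E a :=
    Finset.sum_sdiff (subset_univ A)
  have Hupper : ∑ a ∈ A, ((q-1) * (2 * ((n * na a)^2)))
      + ∑ a ∈ univ \ A, (q * ((n * na a)^2))
      ≤ q * (q-1) * (n^2 * ((q-1) + (n-1)^2)) := by
    calc ∑ a ∈ A, ((q-1) * (2 * ((n * na a)^2)))
          + ∑ a ∈ univ \ A, (q * ((n * na a)^2))
        ≤ ∑ a ∈ A, ((q-1) * (q * E a)) + ∑ a ∈ univ \ A, (q * ((q-1) * E a)) :=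
          Nat.add_le_add (Finset.sum_le_sum HA) (Finset.sum_le_sum HC)
      _ = q * (q-1) * (∑ a ∈ univ \ A, E a + ∑ a ∈ A, E a) := by
          rw [mul_add, Finset.mul_sum, Finset.mul_sum, add_comm]
          congr 1 <;> (apply Finset.sum_congr rfl; intro a _; ring)
      _ = q * (q-1) * (n^2 * ((q-1) + (n-1)^2)) := by rw [Hsplit, sum_Q q hq A h0]
  -- lower bounds
  have LA : n * ((n * (n-1))^2) ≤ ∑ a ∈ A, (n * na a)^2 := by
    have h1 : ∀ a ∈ A, (n * (n-1))^2 ≤ (n * na a)^2 :=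
      fun a _ => Nat.pow_le_pow_left (Nat.mul_le_mul_left _ (na_lb A a)) 2
    have h2 := Finset.sum_le_sum h1
    rwa [Finset.sum_const, smul_eq_mul] at h2
  have LAub : ∑ a ∈ A, (n * na a)^2 ≤ n * ((n * n)^2) := by
    have h1 : ∀ a ∈ A, (n * na a)^2 ≤ (n * n)^2 := by
      intro a _
      exact Nat.pow_le_pow_left (Nat.mul_le_mul_left _ (Finset.card_filter_le _ _)) 2
    have h2 := Finset.sum_le_sum h1
    rwa [Finset.sum_const, smul_eq_mul] at h2
  have Ltot : (q - n) * (n * n)^2 + n * (n * (n-1))^2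
      ≤ ∑ a ∈ univ \ A, (n * na a)^2 + ∑ a ∈ A, (n * na a)^2 := by
    have hh := na_total q hq A
    rw [← Finset.sum_sdiff (subset_univ A)] at hh
    exact hh
  -- cast to ℝ and conclude
  set SA := ∑ a ∈ A, (n * na a)^2 with hSA
  set SC := ∑ a ∈ univ \ A, (n * na a)^2 with hSC
  have key := key_ineq (n : ℝ) (q : ℝ) (by exact_mod_cast hn3)
    (by exact_mod_cast hnq) (by exact_mod_cast hcube)
  have c1 : ((q:ℝ)-1) * (2 * SA) + (q:ℝ) * SC ≤ q * ((q:ℝ)-1) * (n^2 * (((q:ℝ)-1) + ((n:ℝ)-1)^2)) := by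
    have := Hupper
    have e1 : ((q - 1 : ℕ) : ℝ) = (q:ℝ) - 1 := by
      rw [Nat.cast_sub (by omega)]; norm_num
    have e2 : ((n - 1 : ℕ) : ℝ) = (n:ℝ) - 1 := by
      rw [Nat.cast_sub (by omega)]; norm_num
    calc ((q:ℝ)-1) * (2 * SA) + (q:ℝ) * SC
        = (((∑ a ∈ A, ((q-1) * (2 * ((n * na a)^2)))
            + ∑ a ∈ univ \ A, (q * ((n * na a)^2)) : ℕ)) : ℝ) := by
          rw [hSA, hSC]
          push_cast [e1]
          simp only [Finset.mul_sum]
      _ ≤ ((q * (q-1) * (n^2 * ((q-1) + (n-1)^2)) : ℕ) : ℝ) := by exact_mod_cast Hupper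
      _ = q * ((q:ℝ)-1) * (n^2 * (((q:ℝ)-1) + ((n:ℝ)-1)^2)) := by
          push_cast [e1, e2]; ring
  have c2 : (n:ℝ) * (((n:ℝ) * ((n:ℝ)-1))^2) ≤ (SA : ℝ) := by
    have e2 : ((n - 1 : ℕ) : ℝ) = (n:ℝ) - 1 := by
      rw [Nat.cast_sub (by omega)]; norm_num
    calc (n:ℝ) * (((n:ℝ) * ((n:ℝ)-1))^2) = ((n * ((n * (n-1))^2) : ℕ) : ℝ) := by
          push_cast [e2]; ring
      _ ≤ (SA : ℝ) := by exact_mod_cast LA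
  have c3 : ((q:ℝ) - n) * ((n:ℝ) * n)^2 + (n:ℝ) * (((n:ℝ) * ((n:ℝ)-1))^2) ≤ (SC : ℝ) + (SA : ℝ) := by
    have e2 : ((n - 1 : ℕ) : ℝ) = (n:ℝ) - 1 := by
      rw [Nat.cast_sub (by omega)]; norm_num
    have e3 : ((q - n : ℕ) : ℝ) = (q:ℝ) - n := by
      rw [Nat.cast_sub (by omega)]
    calc ((q:ℝ) - n) * ((n:ℝ) * n)^2 + (n:ℝ) * (((n:ℝ) * ((n:ℝ)-1))^2)
        = (((q - n) * (n * n)^2 + n * (n * (n-1))^2 : ℕ) : ℝ) := by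
          push_cast [e2, e3]; ring
      _ ≤ (SC : ℝ) + (SA : ℝ) := by exact_mod_cast Ltot
  have hn0 : (0:ℝ) < (n:ℝ)^2 := by positivity
  have hqR : (4:ℝ) ≤ (q:ℝ) := by exact_mod_cast hq4
  have hq0R : (0:ℝ) ≤ (q:ℝ) := by linarith
  have d2 := mul_le_mul_of_nonneg_left c3 hq0R
  have d3 := mul_le_mul_of_nonneg_left c2 (by linarith : (0:ℝ) ≤ (q:ℝ) - 2)
  have e : (n:ℝ)^2 * ((q:ℝ)*((q:ℝ)-(n:ℝ))*(n:ℝ)^2 + 2*((q:ℝ)-1)*(n:ℝ)*((n:ℝ)-1)^2)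
      ≤ (n:ℝ)^2 * ((q:ℝ)*((q:ℝ)-1)^2 + (q:ℝ)*((q:ℝ)-1)*((n:ℝ)-1)^2) := by
    nlinarith [c1, d2, d3]
  have d4 := (mul_le_mul_iff_right₀ hn0).mp e
  linarith [key, d4]
end

section
/- Let q be an odd prime power, E ⊆ 𝔽_q², and ℓ a line in 𝔽_q². If |E|·|ℓ ∩ E| > 2q², then there exists e ∈ E ∩ ℓ such that the pinned distance set Δ_e(E) = {‖v − e‖ : v ∈ E} has cardinality > q/2. -/
open Finset
open scoped Classical

lemma core_count {F : Type*} [Field F] [Fintype F] [DecidableEq F] (q : ℕ) (hq : Fintype.card F = q)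
    {V : Type*} [DecidableEq V] (E' : Finset V) (A B : V → F) (S : Finset F)
    (hS : ∀ μ ∈ S, 2 * (E'.image (fun v => B v - μ * A v)).card ≤ q) :
    S.card * E'.card ^ 2 ≤
      q ^ 2 * ∑ v ∈ E', (E'.filter (fun v' => A v' = A v ∧ B v' = B v)).card := by
  set m := E'.card with hm
  set P : F → ℕ := fun μ =>
    ((E' ×ˢ E').filter (fun z => B z.1 - μ * A z.1 = B z.2 - μ * A z.2)).card with hP
  have ha : ∀ μ : F, m ^ 2 ≤ (E'.image (fun v => B v - μ * A v)).card * P μ := by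
    intro μ
    set g : V → F := fun v => B v - μ * A v with hg
    have hmsum : m = ∑ t ∈ E'.image g, (E'.filter (fun v => g v = t)).card :=
      card_eq_sum_card_fiberwise (fun x hx => mem_image_of_mem g hx)
    have hPsum : P μ = ∑ t ∈ E'.image g, ((E'.filter (fun v => g v = t)).card) ^ 2 := by
      have h1 : P μ = ∑ t ∈ E'.image g,
          (((E' ×ˢ E').filter (fun z => g z.1 = g z.2)).filter (fun z => g z.1 = t)).card := by
        refine card_eq_sum_card_fiberwise (fun z hz => ?_)
        simp only [mem_coe, mem_filter, mem_product] at hz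
        exact mem_image_of_mem g hz.1.1
      rw [h1]
      refine Finset.sum_congr rfl (fun t ht => ?_)
      have h2 : ((E' ×ˢ E').filter (fun z => g z.1 = g z.2)).filter (fun z => g z.1 = t)
          = (E'.filter (fun v => g v = t)) ×ˢ (E'.filter (fun v => g v = t)) := by
        ext z
        simp only [mem_filter, mem_product]
        constructor
        · rintro ⟨⟨⟨hz1, hz2⟩, he⟩, ht'⟩
          exact ⟨⟨hz1, ht'⟩, hz2, he ▸ ht'⟩
        · rintro ⟨⟨hz1, ht1⟩, hz2, ht2⟩
          exact ⟨⟨⟨hz1, hz2⟩, ht1.trans ht2.symm⟩, ht1⟩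
      rw [h2, card_product, sq]
    rw [hmsum, hPsum]
    exact sq_sum_le_card_mul_sum_sq
  have hb : ∀ μ : F, m ^ 2 ≤ q * P μ := by
    intro μ
    refine (ha μ).trans (Nat.mul_le_mul_right _ ?_)
    exact hq ▸ card_le_univ _
  set R : ℕ := ∑ v ∈ E', (E'.filter (fun v' => A v' = A v ∧ B v' = B v)).card with hR
  -- (c)
  have hc : ∑ μ : F, P μ ≤ m ^ 2 + q * R := by
    have hswap : ∑ μ : F, P μ = ∑ z ∈ E' ×ˢ E',
        (univ.filter (fun μ : F => B z.1 - μ * A z.1 = B z.2 - μ * A z.2)).card := by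
      simp only [hP, card_filter]
      rw [Finset.sum_comm]
    rw [hswap]
    rw [← Finset.sum_filter_add_sum_filter_not (E' ×ˢ E')
      (fun z => A z.1 = A z.2 ∧ B z.1 = B z.2)]
    have hbadcard : ((E' ×ˢ E').filter (fun z => A z.1 = A z.2 ∧ B z.1 = B z.2)).card = R := by
      rw [hR]
      refine (card_eq_sum_card_fiberwise (f := fun z => z.2) (t := E') (fun z hz => ?_)).trans ?_
      · simp only [mem_coe, mem_filter, mem_product] at hz; exact hz.1.2
      · refine Finset.sum_congr rfl (fun v hv => ?_)
        have h2 : (((E' ×ˢ E').filter (fun z => A z.1 = A z.2 ∧ B z.1 = B z.2)).filter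
              (fun z => z.2 = v))
            = (E'.filter (fun x => A x = A v ∧ B x = B v)) ×ˢ ({v} : Finset V) := by
          ext z
          simp only [mem_filter, mem_product, mem_singleton]
          constructor
          · rintro ⟨⟨⟨h1, h2⟩, hA, hB⟩, h3⟩
            subst h3; exact ⟨⟨h1, hA, hB⟩, rfl⟩
          · rintro ⟨⟨h1, hA, hB⟩, h3⟩
            subst h3; exact ⟨⟨⟨h1, hv⟩, hA, hB⟩, rfl⟩
        rw [h2, card_product, card_singleton, mul_one]
    have hbad : ∑ z ∈ (E' ×ˢ E').filter (fun z => A z.1 = A z.2 ∧ B z.1 = B z.2),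
        (univ.filter (fun μ : F => B z.1 - μ * A z.1 = B z.2 - μ * A z.2)).card ≤ R * q := by
      rw [← hbadcard]
      refine (Finset.sum_le_card_nsmul _ _ q (fun z _ => ?_)).trans (le_of_eq (by
        simp [smul_eq_mul]))
      exact hq ▸ card_le_univ _
    have hgood : ∑ z ∈ (E' ×ˢ E').filter (fun z => ¬(A z.1 = A z.2 ∧ B z.1 = B z.2)),
        (univ.filter (fun μ : F => B z.1 - μ * A z.1 = B z.2 - μ * A z.2)).card ≤ m ^ 2 := by
      refine (Finset.sum_le_card_nsmul _ _ 1 (fun z hz => ?_)).trans ?_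
      · simp only [mem_filter, mem_product] at hz
        refine card_le_one.mpr (fun μ1 h1 μ2 h2 => ?_)
        simp only [mem_filter, mem_univ, true_and] at h1 h2
        by_cases hA : A z.1 = A z.2
        · exfalso
          apply hz.2
          refine ⟨hA, ?_⟩
          have := h1
          rw [hA] at this
          linear_combination this
        · have key : μ1 * (A z.1 - A z.2) = μ2 * (A z.1 - A z.2) := by
            linear_combination h2 - h1
          exact mul_right_cancel₀ (sub_ne_zero.mpr hA) key
      · simp only [smul_eq_mul, mul_one]
        calc ((E' ×ˢ E').filter _).card ≤ (E' ×ˢ E').card := card_filter_le _ _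
          _ = m ^ 2 := by rw [card_product, sq]
    calc _ ≤ R * q + m ^ 2 := Nat.add_le_add hbad hgood
      _ = m ^ 2 + q * R := by ring
  -- (d) assemble
  set n := S.card with hn
  have hnq : n ≤ q := hq ▸ card_le_univ _
  have hSsum : n * (2 * m ^ 2) ≤ ∑ μ ∈ S, q * P μ := by
    have := Finset.card_nsmul_le_sum S (fun μ => q * P μ) (2 * m ^ 2) (fun μ hμ => ?_)
    · simpa [smul_eq_mul] using this
    calc 2 * m ^ 2 ≤ 2 * ((E'.image (fun v => B v - μ * A v)).card * P μ) :=
          Nat.mul_le_mul_left _ (ha μ)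
      _ = (2 * (E'.image (fun v => B v - μ * A v)).card) * P μ := by ring
      _ ≤ q * P μ := Nat.mul_le_mul_right _ (hS μ hμ)
  have hcompl : (q - n) * m ^ 2 ≤ ∑ μ ∈ (univ \ S), q * P μ := by
    refine le_trans (le_of_eq ?_) (Finset.card_nsmul_le_sum _ _ _ (fun μ _ => hb μ))
    rw [card_sdiff_of_subset (subset_univ S), smul_eq_mul, card_univ, hq]
  have htot : ∑ μ ∈ S, q * P μ + ∑ μ ∈ (univ \ S), q * P μ ≤ q * (m ^ 2 + q * R) := by
    rw [add_comm, Finset.sum_sdiff (subset_univ S), ← Finset.mul_sum]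
    exact Nat.mul_le_mul_left _ hc
  have hfinal : n * (2 * m ^ 2) + (q - n) * m ^ 2 ≤ q * m ^ 2 + q ^ 2 * R := by
    calc _ ≤ ∑ μ ∈ S, q * P μ + ∑ μ ∈ (univ \ S), q * P μ := Nat.add_le_add hSsum hcompl
      _ ≤ q * (m ^ 2 + q * R) := htot
      _ = q * m ^ 2 + q ^ 2 * R := by ring
  have hid : n * (2 * m ^ 2) + (q - n) * m ^ 2 = n * m ^ 2 + q * m ^ 2 := by
    obtain ⟨k, hk⟩ := Nat.le.dest hnq
    subst hk
    rw [Nat.add_sub_cancel_left]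
    ring
  rw [hid] at hfinal
  omega

lemma step_decomp {F : Type*} [Field F] (a b : F) (hab : ¬(a = 0 ∧ b = 0)) (p v v' : F × F)
    (hA : b * (v'.1 - p.1) - a * (v'.2 - p.2) = b * (v.1 - p.1) - a * (v.2 - p.2))
    (hB : (v'.1 - p.1) ^ 2 + (v'.2 - p.2) ^ 2 = (v.1 - p.1) ^ 2 + (v.2 - p.2) ^ 2) :
    ∃ t : F, v'.1 = v.1 + t * a ∧ v'.2 = v.2 + t * b ∧
      t * (2 * (a * (v.1 - p.1) + b * (v.2 - p.2)) + t * (a ^ 2 + b ^ 2)) = 0 := by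
  obtain ⟨px, py⟩ := p
  obtain ⟨x, y⟩ := v
  obtain ⟨x', y'⟩ := v'
  simp only at hA hB ⊢
  have main : ∀ t : F, x' = x + t * a → y' = y + t * b →
      t * (2 * (a * (x - px) + b * (y - py)) + t * (a ^ 2 + b ^ 2)) = 0 := by
    intro t hx hy
    rw [hx, hy] at hB
    linear_combination hB
  by_cases ha : a = 0
  · have hb : b ≠ 0 := fun hb => hab ⟨ha, hb⟩
    have h1 : b * (x' - x) = 0 := by rw [ha] at hA; linear_combination hA
    have hx : x' = x + ((y' - y) / b) * a := by
      rw [ha, mul_zero, add_zero]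
      have := (mul_eq_zero.mp h1).resolve_left hb
      linear_combination this
    have hy : y' = y + ((y' - y) / b) * b := by field_simp; ring
    exact ⟨(y' - y) / b, hx, hy, main _ hx hy⟩
  · have hx : x' = x + ((x' - x) / a) * a := by field_simp; ring
    have hy : y' = y + ((x' - x) / a) * b := by
      have h2 : a * (y' - y) = b * (x' - x) := by linear_combination -hA
      field_simp
      linear_combination h2
    exact ⟨(x' - x) / a, hx, hy, main _ hx hy⟩

/-- An affine line in `F × F`, given as the finset of solutions of `a*x + b*y = c`
with `(a,b) ≠ (0,0)`. -/
def IsLine {F : Type*} [Field F] [Fintype F] [DecidableEq F] (ℓ : Finset (F × F)) : Prop :=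
  ∃ a b c : F, (a, b) ≠ (0, 0) ∧
    ℓ = Finset.univ.filter (fun p : F × F => a * p.1 + b * p.2 = c)

theorem pinned_distances_on_a_line
    {F : Type*} [Field F] [Fintype F] [DecidableEq F] (q : ℕ) (hq : Fintype.card F = q)
    (hodd : Odd q) (E ℓ : Finset (F × F)) (hℓ : IsLine ℓ)
    (h : E.card * (ℓ ∩ E).card > 2 * q ^ 2) :
    ∃ e ∈ E ∩ ℓ,
      ((E.image (fun v : F × F => (v.1 - e.1) ^ 2 + (v.2 - e.2) ^ 2)).card : ℝ)
        > (q : ℝ) / 2 := by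
  classical
  obtain ⟨a, b, c, hab, hl⟩ := hℓ
  by_contra hcon
  push_neg at hcon
  have hab' : ¬(a = 0 ∧ b = 0) := by
    rintro ⟨h1, h2⟩; exact hab (by simp [h1, h2])
  have h2F : (2 : F) ≠ 0 := by
    intro h2
    have hr : ringChar F ∣ 2 := (ringChar.spec F 2).mp (by exact_mod_cast h2)
    have hp : (ringChar F).Prime := CharP.char_is_prime F (ringChar F)
    have he : ringChar F = 2 := (Nat.prime_dvd_prime_iff_eq hp Nat.prime_two).mp hr
    have h4 := FiniteField.even_card_of_char_two he
    rw [hq] at h4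
    rw [Nat.odd_iff] at hodd
    omega
  have hmemℓ : ∀ e : F × F, e ∈ ℓ ↔ a * e.1 + b * e.2 = c := by
    intro e; rw [hl]; simp
  -- base point
  set p : F × F := if a = 0 then (0, c / b) else (c / a, 0) with hpdef
  have hbne : a = 0 → b ≠ 0 := fun h1 h2 => hab' ⟨h1, h2⟩
  have hp : a * p.1 + b * p.2 = c := by
    by_cases ha : a = 0
    · have hb := hbne ha
      simp only [hpdef, if_pos ha, ha, ↓reduceIte]
      field_simp
      ring
    · simp only [hpdef, if_neg ha]
      field_simp
      ring
  set σ : F × F → F := fun e => if a = 0 then (e.1 - p.1) / b else -(e.2 - p.2) / a with hσdef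
  have hrep : ∀ e ∈ ℓ, e.1 = p.1 + σ e * b ∧ e.2 = p.2 - σ e * a := by
    intro e he
    rw [hmemℓ] at he
    by_cases ha : a = 0
    · have hb := hbne ha
      simp only [hσdef, if_pos ha, ha, ↓reduceIte]
      constructor
      · field_simp
        ring
      · rw [mul_zero, sub_zero]
        rw [ha] at he hp
        have h0 : b * (e.2 - p.2) = 0 := by linear_combination he - hp
        have h1 := (mul_eq_zero.mp h0).resolve_left hb
        linear_combination h1
    · simp only [hσdef, if_neg ha]
      constructor
      · field_simp
        linear_combination he - hp
      · field_simp
        ring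
  set A : F × F → F := fun v => b * (v.1 - p.1) - a * (v.2 - p.2) with hAdef
  set B : F × F → F := fun v => (v.1 - p.1) ^ 2 + (v.2 - p.2) ^ 2 with hBdef
  have hpin : ∀ e ∈ ℓ, ∀ v : F × F, (v.1 - e.1) ^ 2 + (v.2 - e.2) ^ 2
      = (B v - (2 * σ e) * A v) + (σ e) ^ 2 * (a ^ 2 + b ^ 2) := by
    intro e he v
    obtain ⟨h1, h2⟩ := hrep e he
    rw [h1, h2]
    simp only [hAdef, hBdef]
    ring
  -- image cardinality comparison
  have himg : ∀ e ∈ ℓ, ∀ E'' : Finset (F × F), E'' ⊆ E →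
      (E''.image (fun v => B v - (2 * σ e) * A v)).card
        ≤ (E.image (fun v : F × F => (v.1 - e.1) ^ 2 + (v.2 - e.2) ^ 2)).card := by
    intro e he E'' hsub
    have hfun : (fun v : F × F => (v.1 - e.1) ^ 2 + (v.2 - e.2) ^ 2)
        = (fun x => x + (σ e) ^ 2 * (a ^ 2 + b ^ 2)) ∘ (fun v => B v - (2 * σ e) * A v) := by
      funext v; exact hpin e he v
    calc (E''.image (fun v => B v - (2 * σ e) * A v)).card
        = ((E''.image (fun v => B v - (2 * σ e) * A v)).image
            (fun x => x + (σ e) ^ 2 * (a ^ 2 + b ^ 2))).card :=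
          (card_image_of_injective _ (add_left_injective _)).symm
      _ = (E''.image (fun v : F × F => (v.1 - e.1) ^ 2 + (v.2 - e.2) ^ 2)).card := by
          rw [Finset.image_image, ← hfun]
      _ ≤ _ := card_le_card (image_subset_image hsub)
  -- pinned bound from the negated conclusion
  have hpinned : ∀ e ∈ E ∩ ℓ,
      2 * (E.image (fun v : F × F => (v.1 - e.1) ^ 2 + (v.2 - e.2) ^ 2)).card ≤ q := by
    intro e he
    have := hcon e he
    have h2 : 2 * ((E.image (fun v : F × F => (v.1 - e.1) ^ 2 + (v.2 - e.2) ^ 2)).card : ℝ)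
        ≤ (q : ℝ) := by linarith
    exact_mod_cast h2
  -- slopes
  set S : Finset F := (ℓ ∩ E).image (fun e => 2 * σ e) with hSdef
  have hσinj : ∀ e ∈ ℓ, ∀ e' ∈ ℓ, σ e = σ e' → e = e' := by
    intro e he e' he' hσ
    obtain ⟨h1, h2⟩ := hrep e he
    obtain ⟨h1', h2'⟩ := hrep e' he'
    ext
    · rw [h1, h1', hσ]
    · rw [h2, h2', hσ]
  have hScard : S.card = (ℓ ∩ E).card := by
    rw [hSdef]
    apply card_image_of_injOn
    intro e he e' he' hee
    have he1 : e ∈ ℓ := (mem_inter.mp he).1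
    have he1' : e' ∈ ℓ := (mem_inter.mp he').1
    exact hσinj e he1 e' he1' (mul_left_cancel₀ h2F hee)
  have hlq : ℓ.card ≤ q := by
    have := Finset.card_le_card_of_injOn σ (fun x _ => mem_univ (σ x))
      (fun e he e' he' => hσinj e he e' he')
    rwa [card_univ, hq] at this
  have hnq : (ℓ ∩ E).card ≤ q := le_trans (card_le_card inter_subset_left) hlq
  -- slope hypothesis for core_count
  have hS : ∀ E'' : Finset (F × F), E'' ⊆ E → ∀ μ ∈ S,
      2 * (E''.image (fun v => B v - μ * A v)).card ≤ q := by
    intro E'' hsub μ hμ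
    rw [hSdef, mem_image] at hμ
    obtain ⟨e, he, rfl⟩ := hμ
    have he1 : e ∈ ℓ := (mem_inter.mp he).1
    have he2 : e ∈ E := (mem_inter.mp he).2
    calc 2 * (E''.image (fun v => B v - 2 * σ e * A v)).card
        ≤ 2 * (E.image (fun v : F × F => (v.1 - e.1) ^ 2 + (v.2 - e.2) ^ 2)).card := by
          have := himg e he1 E'' hsub
          omega
      _ ≤ q := hpinned e (mem_inter.mpr ⟨he2, he1⟩)
  -- the two cases
  by_cases hδ : a ^ 2 + b ^ 2 = 0
  · -- isotropic line
    set E' : Finset (F × F) := E \ ℓ with hE'def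
    have hRb : ∑ v ∈ E', (E'.filter (fun v' => A v' = A v ∧ B v' = B v)).card ≤ E'.card := by
      have := Finset.sum_le_card_nsmul E'
        (fun v => (E'.filter (fun v' => A v' = A v ∧ B v' = B v)).card) 1 ?_
      · simpa using this
      intro v hv
      have hvℓ : v ∉ ℓ := (mem_sdiff.mp hv).2
      have hsub : (E'.filter (fun v' => A v' = A v ∧ B v' = B v)) ⊆ {v} := by
        intro v' hv'
        rw [mem_filter] at hv'
        obtain ⟨hv'E, hA', hB'⟩ := hv'
        obtain ⟨t, hx, hy, ht⟩ := step_decomp a b hab' p v v'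
          (by simpa [hAdef] using hA') (by simpa [hBdef] using hB')
        rw [hδ, mul_zero, add_zero] at ht
        have hN : a * (v.1 - p.1) + b * (v.2 - p.2) ≠ 0 := by
          intro hN0
          apply hvℓ
          rw [hmemℓ]
          linear_combination hN0 + hp
        have ht0 : t = 0 := by
          rcases mul_eq_zero.mp ht with h0 | h0
          · exact h0
          · exact absurd h0 (mul_ne_zero h2F hN)
        rw [mem_singleton]
        ext
        · rw [hx, ht0]; ring
        · rw [hy, ht0]; ring
      calc _ ≤ ({v} : Finset (F × F)).card := card_le_card hsub
        _ = 1 • 1 := by simp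
    have hcore := core_count q hq E' A B S (hS E' sdiff_subset)
    rw [hScard] at hcore
    have hkey : (ℓ ∩ E).card * E'.card ^ 2 ≤ q ^ 2 * E'.card :=
      hcore.trans (Nat.mul_le_mul_left _ hRb)
    by_cases hm' : E'.card = 0
    · have hsubℓ : E ⊆ ℓ := sdiff_eq_empty_iff_subset.mp (card_eq_zero.mp hm')
      have hEq : E.card ≤ q := le_trans (card_le_card hsubℓ) hlq
      have : E.card * (ℓ ∩ E).card ≤ 2 * q ^ 2 := by
        calc E.card * (ℓ ∩ E).card ≤ q * q := Nat.mul_le_mul hEq hnq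
          _ ≤ 2 * q ^ 2 := by rw [pow_two]; omega
      exact absurd h (not_lt.mpr this)
    · have hmpos : 0 < E'.card := Nat.pos_of_ne_zero hm'
      have h1 : (ℓ ∩ E).card * E'.card ≤ q ^ 2 := by
        have h2 : ((ℓ ∩ E).card * E'.card) * E'.card ≤ (q ^ 2) * E'.card := by
          calc ((ℓ ∩ E).card * E'.card) * E'.card = (ℓ ∩ E).card * E'.card ^ 2 := by ring
            _ ≤ q ^ 2 * E'.card := hkey
        exact Nat.le_of_mul_le_mul_right h2 hmpos
      have hdecomp : E'.card + (E ∩ ℓ).card = E.card := card_sdiff_add_card_inter E ℓ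
      have hcomm : (E ∩ ℓ).card = (ℓ ∩ E).card := by rw [inter_comm]
      have : E.card * (ℓ ∩ E).card ≤ 2 * q ^ 2 := by
        have h3 : (ℓ ∩ E).card * (ℓ ∩ E).card ≤ q * q := Nat.mul_le_mul hnq hnq
        calc E.card * (ℓ ∩ E).card = (ℓ ∩ E).card * E'.card + (ℓ ∩ E).card * (E ∩ ℓ).card := by
              rw [← hdecomp]; ring
          _ ≤ q ^ 2 + q * q := by rw [hcomm]; exact Nat.add_le_add h1 h3
          _ = 2 * q ^ 2 := by ring
      exact absurd h (not_lt.mpr this)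
  · -- non-isotropic line
    have hRb : ∑ v ∈ E, (E.filter (fun v' => A v' = A v ∧ B v' = B v)).card ≤ E.card * 2 := by
      have := Finset.sum_le_card_nsmul E
        (fun v => (E.filter (fun v' => A v' = A v ∧ B v' = B v)).card) 2 ?_
      · simpa [smul_eq_mul] using this
      intro v hv
      set t0 : F := -(2 * (a * (v.1 - p.1) + b * (v.2 - p.2))) / (a ^ 2 + b ^ 2) with ht0def
      have hsub : (E.filter (fun v' => A v' = A v ∧ B v' = B v))
          ⊆ {v, (v.1 + t0 * a, v.2 + t0 * b)} := by
        intro v' hv'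
        rw [mem_filter] at hv'
        obtain ⟨hv'E, hA', hB'⟩ := hv'
        obtain ⟨t, hx, hy, ht⟩ := step_decomp a b hab' p v v'
          (by simpa [hAdef] using hA') (by simpa [hBdef] using hB')
        rcases mul_eq_zero.mp ht with h0 | h0
        · apply mem_insert.mpr; left
          ext
          · rw [hx, h0]; ring
          · rw [hy, h0]; ring
        · apply mem_insert.mpr; right
          rw [mem_singleton]
          have htt : t = t0 := by
            rw [ht0def]
            rw [eq_div_iff hδ]
            linear_combination h0
          ext
          · simpa [htt] using hx
          · simpa [htt] using hy
      calc _ ≤ ({v, (v.1 + t0 * a, v.2 + t0 * b)} : Finset (F × F)).card := card_le_card hsub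
        _ ≤ 2 := by
          refine (card_insert_le _ _).trans ?_
          simp
    have hcore := core_count q hq E A B S (hS E subset_rfl)
    rw [hScard] at hcore
    have hkey : (ℓ ∩ E).card * E.card ^ 2 ≤ q ^ 2 * (E.card * 2) :=
      hcore.trans (Nat.mul_le_mul_left _ hRb)
    have hmpos : 0 < E.card := by
      rcases Nat.eq_zero_or_pos E.card with h0 | h0
      · rw [h0] at h; omega
      · exact h0
    have h1 : (ℓ ∩ E).card * E.card ≤ 2 * q ^ 2 := by
      have h2 : ((ℓ ∩ E).card * E.card) * E.card ≤ (2 * q ^ 2) * E.card := by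
        calc ((ℓ ∩ E).card * E.card) * E.card = (ℓ ∩ E).card * E.card ^ 2 := by ring
          _ ≤ q ^ 2 * (E.card * 2) := hkey
          _ = (2 * q ^ 2) * E.card := by ring
      exact Nat.le_of_mul_le_mul_right h2 hmpos
    rw [mul_comm] at h1
    exact absurd h (not_lt.mpr h1)
end

section
/- Let q be an odd prime power and E ⊆ 𝔽_q² with |E| > (2q)^{3/2}. Then there exists e ∈ E such that |{‖v − e‖ : v ∈ E}| > q/2. -/
open Finset Polynomial

set_option linter.unusedSectionVars false

namespace PinnedAux

variable {F : Type*} [Field F] [Fintype F] [DecidableEq F]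

def nrm (x : F × F) : F := x.1 ^ 2 + x.2 ^ 2
def sph (t : F) : Finset (F × F) := univ.filter (fun x => nrm x = t)
def nu (E : Finset (F × F)) (u : F × F) (t : F) : ℕ :=
  (E.filter (fun v => nrm (v - u) = t)).card

theorem line_card (a b c : F) (hab : ¬(a = 0 ∧ b = 0)) :
    (univ.filter fun x : F × F => a * x.1 + b * x.2 = c).card = Fintype.card F := by
  rcases eq_or_ne a 0 with ha | ha
  · have hb : b ≠ 0 := by tauto
    rw [← Finset.card_univ]
    apply Finset.card_nbij' (fun x : F × F => x.1) (fun y : F => (y, (c - a * y) * b⁻¹))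
    · intro x _; exact mem_univ _
    · intro y _
      simp only [Finset.mem_coe, mem_filter, mem_univ, true_and]
      field_simp
      ring
    · intro x hx
      simp only [Finset.mem_coe, mem_filter, mem_univ, true_and] at hx
      have : x.2 = (c - a * x.1) * b⁻¹ := by field_simp; linear_combination hx
      exact Prod.ext rfl this.symm
    · intro y _; rfl
  · rw [← Finset.card_univ]
    apply Finset.card_nbij' (fun x : F × F => x.2) (fun y : F => ((c - b * y) * a⁻¹, y))
    · intro x _; exact mem_univ _
    · intro y _
      simp only [Finset.mem_coe, mem_filter, mem_univ, true_and]
      field_simp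
      ring
    · intro x hx
      simp only [Finset.mem_coe, mem_filter, mem_univ, true_and] at hx
      have : x.1 = (c - b * x.2) * a⁻¹ := by field_simp; linear_combination hx
      exact Prod.ext this.symm rfl
    · intro y _; rfl


theorem pair_card (h2 : (2 : F) ≠ 0) {v w : F × F} (hvw : v ≠ w) :
    (univ.filter fun u : F × F => nrm (v - u) = nrm (w - u)).card = Fintype.card F := by
  have hset : (univ.filter fun u : F × F => nrm (v - u) = nrm (w - u))
      = (univ.filter fun u : F × F =>
          (2*(w.1-v.1)) * u.1 + (2*(w.2-v.2)) * u.2 = nrm w - nrm v) := by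
    apply Finset.filter_congr
    intro u _
    simp only [nrm, Prod.fst_sub, Prod.snd_sub]
    constructor
    · intro hh; linear_combination hh
    · intro hh; linear_combination hh
  rw [hset]
  apply line_card
  rintro ⟨h1, hb⟩
  apply hvw
  have e1 : v.1 = w.1 := by
    rcases mul_eq_zero.mp h1 with h | h
    · exact absurd h h2
    · exact (sub_eq_zero.mp h).symm
  have e2 : v.2 = w.2 := by
    rcases mul_eq_zero.mp hb with h | h
    · exact absurd h h2
    · exact (sub_eq_zero.mp h).symm
  exact Prod.ext e1 e2


theorem sphere_translate (v : F × F) (t : F) :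
    (univ.filter fun u : F × F => nrm (v - u) = t).card = (sph t).card := by
  apply Finset.card_nbij' (fun u : F × F => v - u) (fun x : F × F => v - x)
  · intro u hu
    simp only [Finset.mem_coe, sph, mem_filter, mem_univ, true_and] at hu ⊢
    exact hu
  · intro x hx
    simp only [Finset.mem_coe, sph, mem_filter, mem_univ, true_and] at hx ⊢
    simpa using hx
  · intro u _; simp
  · intro x _; simp


theorem sph_card_sum : ∑ t : F, (sph (t : F)).card = Fintype.card F ^ 2 := by
  have h : (univ : Finset (F × F)).card = Fintype.card F ^ 2 := by
    simp [Fintype.card_prod, sq]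
  rw [← h, Finset.card_eq_sum_card_fiberwise (f := fun x : F × F => nrm x)
    (fun x _ => mem_univ _)]
  rfl


theorem sq_zero {x : F} (h : x ^ 2 = 0) : x = 0 := pow_eq_zero_iff (by norm_num) |>.mp h


theorem sph_zero_card : (sph (0 : F)).card ≤ 2 * Fintype.card F - 1 := by
  classical
  set R : Finset F := univ.filter (fun r : F => r ^ 2 = -1) with hR
  have hRcard : R.card ≤ 2 := by
    rcases R.eq_empty_or_nonempty with he | ⟨r0, hr0⟩
    · simp [he]
    · have hsub : R ⊆ {r0, -r0} := by
        intro r hr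
        simp only [hR, mem_filter, mem_univ, true_and] at hr hr0
        have : (r - r0) * (r + r0) = 0 := by linear_combination hr - hr0
        rcases mul_eq_zero.mp this with h | h
        · simp [sub_eq_zero.mp h]
        · simp [eq_neg_of_add_eq_zero_left h]
      calc R.card ≤ ({r0, -r0} : Finset F).card := Finset.card_le_card hsub
        _ ≤ 2 := Finset.card_insert_le _ _ |>.trans (by simp)
  have hmain : ((sph (0:F)).erase 0).card ≤ (R ×ˢ (univ.erase (0:F))).card := by
    apply Finset.card_le_card_of_injOn (fun x : F × F => (x.1 * x.2⁻¹, x.2))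
    · intro x hx
      simp only [Finset.mem_coe, sph, mem_erase, mem_filter, mem_univ, true_and] at hx
      obtain ⟨hx0, hxn⟩ := hx
      rw [nrm] at hxn
      have hx2 : x.2 ≠ 0 := by
        intro h2
        apply hx0
        have h1 : x.1 ^ 2 = 0 := by rw [h2] at hxn; simpa using hxn
        exact Prod.ext (sq_zero h1) h2
      simp only [Finset.mem_coe, Finset.mem_product, hR, mem_filter, mem_univ, true_and, mem_erase]
      refine ⟨?_, hx2, trivial⟩
      field_simp
      linear_combination hxn
    · intro x hx y hy hxy
      rw [Finset.mem_coe] at hx hy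
      simp only [sph, mem_erase, mem_filter, mem_univ, true_and] at hx hy
      simp only [Prod.mk.injEq] at hxy
      obtain ⟨h1, h2⟩ := hxy
      have hx2 : x.2 ≠ 0 := by
        intro hz; apply hx.1
        have hzz : x.1 ^ 2 = 0 := by have := hx.2; rw [nrm, hz] at this; simpa using this
        exact Prod.ext (sq_zero hzz) hz
      have hy2 : y.2 ≠ 0 := h2 ▸ hx2
      have he1 : x.1 = y.1 := by
        rw [h2] at h1
        field_simp at h1
        exact h1
      exact Prod.ext he1 h2
  have hP : (R ×ˢ (univ.erase (0:F))).card ≤ 2 * (Fintype.card F - 1) := by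
    rw [Finset.card_product]
    have hcc : (univ.erase (0:F)).card = Fintype.card F - 1 := by
      rw [Finset.card_erase_of_mem (mem_univ _), Finset.card_univ]
    rw [hcc]
    exact Nat.mul_le_mul_right _ hRcard
  have h0 : (sph (0:F)).card ≤ ((sph (0:F)).erase 0).card + 1 := by
    by_cases hmem : (0 : F × F) ∈ sph (0:F)
    · rw [Finset.card_erase_of_mem hmem]
      have : 1 ≤ (sph (0:F)).card := Finset.card_pos.mpr ⟨0, hmem⟩
      omega
    · rw [Finset.erase_eq_of_notMem hmem]; omega
  have hq1 : 1 ≤ Fintype.card F := Fintype.card_pos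
  omega


theorem sq_add_sq' (hodd : Fintype.card F % 2 = 1) (t : F) : ∃ x : F × F, nrm x = t := by
  let f : F[X] := X ^ 2
  let g : F[X] := X ^ 2 - C t
  obtain ⟨a, b, hab⟩ : ∃ a b, f.eval a + g.eval b = 0 :=
    FiniteField.exists_root_sum_quadratic (degree_X_pow 2)
      (degree_X_pow_sub_C (by norm_num) _) hodd
  refine ⟨(a, b), ?_⟩
  simp only [f, g, eval_pow, eval_X, eval_sub, eval_C] at hab
  simp only [nrm]
  linear_combination hab

/-- multiplication respects norm; fibers of nonzero norm have equal size -/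


theorem sph_card_mono (hodd : Fintype.card F % 2 = 1) {t t' : F} (ht : t ≠ 0) (ht' : t' ≠ 0) :
    (sph (t' : F)).card ≤ (sph t).card := by
  obtain ⟨c, hc⟩ := sq_add_sq' hodd (t * t'⁻¹)
  have hcn : nrm c ≠ 0 := by rw [hc]; exact mul_ne_zero ht (inv_ne_zero ht')
  apply Finset.card_le_card_of_injOn
    (fun x : F × F => (x.1 * c.1 - x.2 * c.2, x.1 * c.2 + x.2 * c.1))
  · intro x hx
    simp only [Finset.mem_coe, sph, mem_filter, mem_univ, true_and] at hx ⊢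
    simp only [nrm] at hx ⊢
    have : (x.1 * c.1 - x.2 * c.2) ^ 2 + (x.1 * c.2 + x.2 * c.1) ^ 2
        = (x.1 ^ 2 + x.2 ^ 2) * (c.1 ^ 2 + c.2 ^ 2) := by ring
    rw [this, hx]
    rw [nrm] at hc
    rw [hc]
    field_simp
  · intro x hx y hy hxy
    rw [Finset.mem_coe] at hx hy
    simp only [Prod.mk.injEq] at hxy
    obtain ⟨e1, e2⟩ := hxy
    rw [nrm] at hcn
    have d1 : (x.1 - y.1) * (c.1 ^ 2 + c.2 ^ 2) = 0 := by linear_combination c.1 * e1 + c.2 * e2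
    have d2 : (x.2 - y.2) * (c.1 ^ 2 + c.2 ^ 2) = 0 := by linear_combination c.1 * e2 - c.2 * e1
    have f1 : x.1 = y.1 := by
      rcases mul_eq_zero.mp d1 with h | h
      · exact sub_eq_zero.mp h
      · exact absurd h hcn
    have f2 : x.2 = y.2 := by
      rcases mul_eq_zero.mp d2 with h | h
      · exact sub_eq_zero.mp h
      · exact absurd h hcn
    exact Prod.ext f1 f2


theorem sph_card_ge (hodd : Fintype.card F % 2 = 1) {t : F} (ht : t ≠ 0) :
    Fintype.card F ≤ (sph t).card + 1 := by
  have hsum : ∑ t' : F, (sph (t' : F)).card = Fintype.card F ^ 2 := sph_card_sum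
  have h0 : (sph (0 : F)).card ≤ 2 * Fintype.card F - 1 := sph_zero_card
  have hq1 : 1 ≤ Fintype.card F := Fintype.card_pos
  have hsplit : ∑ t' : F, (sph (t' : F)).card
      = (sph (0:F)).card + ∑ t' ∈ univ.erase (0:F), (sph (t' : F)).card := by
    rw [← Finset.add_sum_erase _ _ (mem_univ (0:F))]
  have hbound : ∑ t' ∈ univ.erase (0:F), (sph (t' : F)).card ≤ (Fintype.card F - 1) * (sph t).card := by
    calc ∑ t' ∈ univ.erase (0:F), (sph (t' : F)).card
        ≤ ∑ _t' ∈ univ.erase (0:F), (sph t).card := by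
          apply Finset.sum_le_sum
          intro i hi
          exact sph_card_mono hodd ht (Finset.ne_of_mem_erase hi)
      _ = (Fintype.card F - 1) * (sph t).card := by
          rw [Finset.sum_const, Finset.card_erase_of_mem (mem_univ _), Finset.card_univ, smul_eq_mul]
  -- q^2 ≤ (2q-1) + (q-1) * S t  ⇒  q ≤ S t + 1  (nat arithmetic)
  set s := (sph t).card with hs
  have h1 : Fintype.card F ^ 2 ≤ (sph (0:F)).card + (Fintype.card F - 1) * s := by
    calc Fintype.card F ^ 2 = (sph (0:F)).card + ∑ t' ∈ univ.erase (0:F), (sph (t' : F)).card := by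
          rw [← hsum, hsplit]
      _ ≤ _ := Nat.add_le_add_left hbound _
  have h2 : Fintype.card F ^ 2 ≤ 2 * Fintype.card F - 1 + (Fintype.card F - 1) * s :=
    h1.trans (Nat.add_le_add_right h0 _)
  obtain ⟨k, hk⟩ : ∃ k, Fintype.card F = k + 1 := ⟨Fintype.card F - 1, by omega⟩
  rw [hk] at h2 ⊢
  simp only [Nat.add_sub_cancel] at h2
  have hkey : (k+1)^2 ≤ 2*k+1 + k*s := by omega
  rcases Nat.eq_zero_or_pos k with h | h
  · omega
  · have hks : k * k ≤ k * s := by nlinarith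
    have := Nat.le_of_mul_le_mul_left hks h
    omega


theorem nu_sum (E : Finset (F × F)) (t : F) :
    ∑ u : F × F, nu E u t = E.card * (sph t).card := by
  unfold nu
  simp_rw [Finset.card_filter]
  rw [Finset.sum_comm]
  have h : ∀ v ∈ E, (∑ u : F × F, if nrm (v - u) = t then 1 else 0) = (sph t).card := by
    intro v _
    rw [← Finset.card_filter]
    exact sphere_translate v t
  rw [Finset.sum_congr rfl h, Finset.sum_const, smul_eq_mul]


theorem nu_sq_sum (h2 : (2 : F) ≠ 0) (E : Finset (F × F)) :
    ∑ u : F × F, ∑ t : F, (nu E u t) ^ 2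
      = E.card * Fintype.card F ^ 2 + E.card * (E.card - 1) * Fintype.card F := by
  have step1 : ∀ u : F × F, ∑ t : F, (nu E u t) ^ 2
      = ∑ v ∈ E, ∑ w ∈ E, (if nrm (v - u) = nrm (w - u) then 1 else 0) := by
    intro u
    unfold nu
    simp_rw [Finset.card_filter, sq, Finset.sum_mul_sum]
    rw [Finset.sum_comm]
    apply Finset.sum_congr rfl
    intro v _
    rw [Finset.sum_comm]
    apply Finset.sum_congr rfl
    intro w _
    have : ∀ t : F, (if nrm (v - u) = t then 1 else 0) * (if nrm (w - u) = t then 1 else 0)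
        = if nrm (v - u) = t then (if nrm (w - u) = nrm (v - u) then 1 else 0) else 0 := by
      intro t
      split_ifs with p1 p2 p3 p4 <;> simp_all
    simp_rw [this]
    rw [Finset.sum_ite_eq (univ : Finset F) (nrm (v - u))
      (fun _ => if nrm (w - u) = nrm (v - u) then 1 else 0)]
    simp [eq_comm]
  simp_rw [step1]
  rw [Finset.sum_comm]
  have step2 : ∀ v ∈ E, (∑ u : F × F, ∑ w ∈ E, if nrm (v - u) = nrm (w - u) then 1 else 0)
      = Fintype.card F ^ 2 + (E.card - 1) * Fintype.card F := by
    intro v hv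
    rw [Finset.sum_comm]
    have hterm : ∀ w ∈ E, (∑ u : F × F, if nrm (v - u) = nrm (w - u) then 1 else 0)
        = if v = w then Fintype.card F ^ 2 else Fintype.card F := by
      intro w _
      rw [← Finset.card_filter]
      by_cases hvw : v = w
      · subst hvw
        simp only [if_true]
        simp [Fintype.card_prod, sq]
      · rw [if_neg hvw]
        exact pair_card h2 hvw
    rw [Finset.sum_congr rfl hterm]
    have hqq : Fintype.card F ≤ Fintype.card F ^ 2 :=
      Nat.le_self_pow (by norm_num) _
    have hsplit : ∀ x ∈ E, (if v = x then Fintype.card F ^ 2 else Fintype.card F)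
        = Fintype.card F + (if v = x then Fintype.card F ^ 2 - Fintype.card F else 0) := by
      intro x _
      split_ifs <;> omega
    rw [Finset.sum_congr rfl hsplit, Finset.sum_add_distrib, Finset.sum_const,
      Finset.sum_ite_eq E v (fun _ => Fintype.card F ^ 2 - Fintype.card F), if_pos hv,
      smul_eq_mul]
    obtain ⟨m, hm⟩ : ∃ m, E.card = m + 1 :=
      ⟨E.card - 1, by have := Finset.card_pos.mpr ⟨v, hv⟩; omega⟩
    rw [hm]
    have hh : (m + 1) * Fintype.card F = m * Fintype.card F + Fintype.card F := by ring
    simp only [Nat.add_sub_cancel]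
    omega
  rw [Finset.sum_congr rfl step2, Finset.sum_const, smul_eq_mul, Nat.mul_add, ← Nat.mul_assoc]


theorem arith_aux (k : ℝ) (hk : 17 ≤ k) :
    4*(k-1)^6 - 2*k^3*(k-1)^3 - 18*k^5 ≥ 0 := by
  nlinarith [sq_nonneg (k-17), sq_nonneg k, pow_pos (show (0:ℝ) < k by linarith) 3,
    pow_pos (show (0:ℝ) < k by linarith) 4, sq_nonneg (k*(k-17))]


theorem arith_main (k x : ℝ) (hk : 17 ≤ k) (hx : 1 ≤ x) (hx2 : 8*k^3 + 1 ≤ x^2) :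
    x^2*(k-1)^3 > 2*k^6 + 6*x*k^4 := by
  have hk1 : (0:ℝ) < k - 1 := by linarith
  have h1 : (k-1)^3 > 0 := by positivity
  have h3 : 4*(k-1)^6 - 2*k^3*(k-1)^3 - 18*k^5 ≥ 0 := arith_aux k hk
  have hsq : ((k-1)^3*x - 6*k^4)^2 ≥ 0 := sq_nonneg _
  have hkpos : (0:ℝ) < k := by linarith
  -- multiply target by (k-1)^3 > 0
  rw [gt_iff_lt, ← mul_lt_mul_iff_of_pos_right h1]
  nlinarith [mul_pos (pow_pos hkpos 3) h1, pow_pos hkpos 3, pow_pos hkpos 8,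
    mul_le_mul_of_nonneg_left hx2 (le_of_lt (pow_pos hk1 6)),
    mul_nonneg (le_of_lt (pow_pos hkpos 3)) h3]


theorem arith_final (k x : ℝ) (hk : 17 ≤ k) (hx : 1 ≤ x) (hx2 : 8*k^3 + 1 ≤ x^2) :
    x*((k-1)/2)*(x*(k-1)/k^2)^2 > x*k^2 + x*(x-1)*k - x^2*(k-1)^3/k^2 := by
  have hkpos : (0:ℝ) < k := by linarith
  have hk4 : (0:ℝ) < k^4 := by positivity
  have hmain : x^2*(k-1)^3 > 2*k^6 + 6*x*k^4 := arith_main k x hk hx hx2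
  have hcube : (k-1)^3 ≥ k^3 - 3*k^2 := by nlinarith
  have hxpos : (0:ℝ) < x := by linarith
  rw [gt_iff_lt, ← sub_pos]
  have key : x*((k-1)/2)*((x*(k-1))/(k^2))^2 - (x*k^2 + x*(x-1)*k - x^2*(k-1)^3/k^2)
      = (x*(x^2*(k-1)^3 - (2*k^6 + 2*x*k^5 - 2*k^5 - 2*x*k^2*(k-1)^3)))/(2*k^4) := by
    field_simp
    ring
  rw [key]
  apply div_pos
  · apply mul_pos hxpos
    have h2 : 2*x*k^2*(k-1)^3 ≥ 2*x*k^5 - 6*x*k^4 := by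
      nlinarith [mul_nonneg (mul_nonneg hxpos.le (sq_nonneg k))
        (show (0:ℝ) ≤ (k-1)^3 - (k^3 - 3*k^2) by linarith)]
    nlinarith
  · positivity


/-- sphere centered at e, radius t -/
theorem sphere_center_card (e : F × F) (t : F) :
    (univ.filter fun x : F × F => nrm (x - e) = t).card = (sph t).card := by
  rw [← sphere_translate e t]
  congr 1
  apply Finset.filter_congr
  intro x _
  simp only [nrm, Prod.fst_sub, Prod.snd_sub]
  constructor
  · intro hh; linear_combination hh
  · intro hh; linear_combination hh

end PinnedAux

open PinnedAux

set_option maxHeartbeats 2000000 in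
theorem pinned_distances
    {F : Type*} [Field F] [Fintype F] [DecidableEq F] (q : ℕ) (hq : Fintype.card F = q)
    (hodd : Odd q) (E : Finset (F × F))
    (h : (E.card : ℝ) > (2 * (q : ℝ)) ^ ((3 : ℝ) / 2)) :
    ∃ e ∈ E,
      ((E.image (fun v : F × F => (v.1 - e.1) ^ 2 + (v.2 - e.2) ^ 2)).card : ℝ)
        > (q : ℝ) / 2 := by
  classical
  by_contra hcon
  push_neg at hcon
  have hoddm : q % 2 = 1 := Nat.odd_iff.mp hodd
  have hq1 : 1 ≤ q := hq ▸ Fintype.card_pos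
  have hq3 : 3 ≤ q := by
    have h2 : 2 ≤ q := hq ▸ Fintype.one_lt_card
    omega
  have h2F : (2 : F) ≠ 0 := by
    apply Ring.two_ne_zero
    intro hc
    have := FiniteField.even_card_iff_char_two.mp hc
    rw [hq] at this
    omega
  -- E.card^2 > 8 q^3
  have hE2 : 8 * q ^ 3 + 1 ≤ E.card ^ 2 := by
    have h0 : (0:ℝ) ≤ (2 * (q:ℝ)) ^ ((3:ℝ)/2) := by positivity
    have hsq : ((E.card : ℝ))^2 > ((2 * (q:ℝ)) ^ ((3:ℝ)/2))^2 :=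
      pow_lt_pow_left₀ h h0 (by norm_num)
    have hrw : ((2 * (q:ℝ)) ^ ((3:ℝ)/2))^2 = (2 * (q:ℝ))^(3:ℕ) := by
      rw [← Real.rpow_natCast ((2 * (q:ℝ)) ^ ((3:ℝ)/2)) 2, ← Real.rpow_mul (by positivity),
        show (3:ℝ)/2 * ((2:ℕ):ℝ) = ((3:ℕ):ℝ) by norm_num, Real.rpow_natCast]
    rw [hrw, show (2*(q:ℝ))^(3:ℕ) = 8*(q:ℝ)^3 from by ring] at hsq
    have hn : 8 * q ^ 3 < E.card ^ 2 := by exact_mod_cast hsq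
    omega
  have hEpos : 1 ≤ E.card := by
    by_contra hc
    push_neg at hc
    have hz : E.card = 0 := by omega
    rw [hz] at hE2
    simp at hE2
  -- missed distances bound from hcon
  have hmiss : ∀ e ∈ E,
      q - 1 ≤ 2 * ((univ.erase (0:F)).filter (fun t => nu E e t = 0)).card := by
    intro e he
    have himg : 2 * (E.image (fun v : F × F => (v.1 - e.1) ^ 2 + (v.2 - e.2) ^ 2)).card + 1 ≤ q := by
      have hr := hcon e he
      have hh2 : 2 * ((E.image (fun v : F × F => (v.1 - e.1) ^ 2 + (v.2 - e.2) ^ 2)).card : ℝ) ≤ q := by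
        linarith
      have hn : 2 * (E.image (fun v : F × F => (v.1 - e.1) ^ 2 + (v.2 - e.2) ^ 2)).card ≤ q := by
        exact_mod_cast hh2
      omega
    set A := (univ.erase (0:F)).filter (fun t => nu E e t = 0) with hA
    set B := (univ.erase (0:F)).filter (fun t => ¬ (nu E e t = 0)) with hB
    have hAB : A.card + B.card = q - 1 := by
      rw [hA, hB, Finset.card_filter_add_card_filter_not,
        Finset.card_erase_of_mem (mem_univ _), Finset.card_univ, hq]
    have hBsub : B ⊆ E.image (fun v : F × F => (v.1 - e.1) ^ 2 + (v.2 - e.2) ^ 2) := by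
      intro t ht
      rw [hB, Finset.mem_filter] at ht
      have hnz := ht.2
      simp only [nu] at hnz
      obtain ⟨v, hv⟩ := Finset.card_pos.mp (Nat.pos_of_ne_zero hnz)
      rw [Finset.mem_filter] at hv
      exact Finset.mem_image.mpr ⟨v, hv.1, by
        have := hv.2
        simp only [nrm, Prod.fst_sub, Prod.snd_sub] at this
        exact this⟩
    have hBcard := Finset.card_le_card hBsub
    omega
  rcases le_or_gt q 16 with hq16 | hq17
  -- CASE A : small q, dense set argument
  · obtain ⟨e, he⟩ := Finset.card_pos.mp (by omega : 0 < E.card)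
    set f : (F × F) → F := fun v => (v.1 - e.1) ^ 2 + (v.2 - e.2) ^ 2 with hf
    have himg : 2 * (E.image f).card + 1 ≤ q := by
      have hr := hcon e he
      have hh2 : 2 * ((E.image f).card : ℝ) ≤ q := by rw [hf]; linarith
      have hn : 2 * (E.image f).card ≤ q := by exact_mod_cast hh2
      omega
    set A := (univ.erase (0:F)).filter (fun t => nu E e t = 0) with hA
    set B := (univ.erase (0:F)).filter (fun t => ¬ (nu E e t = 0)) with hB
    have hAB : A.card + B.card = q - 1 := by
      rw [hA, hB, Finset.card_filter_add_card_filter_not,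
        Finset.card_erase_of_mem (mem_univ _), Finset.card_univ, hq]
    have hBsub : insert (0:F) B ⊆ E.image f := by
      intro t ht
      rcases Finset.mem_insert.mp ht with h0 | hB'
      · subst h0
        exact Finset.mem_image.mpr ⟨e, he, by rw [hf]; ring⟩
      · rw [hB, Finset.mem_filter] at hB'
        have hnz := hB'.2
        simp only [nu] at hnz
        obtain ⟨v, hv⟩ := Finset.card_pos.mp (Nat.pos_of_ne_zero hnz)
        rw [Finset.mem_filter] at hv
        exact Finset.mem_image.mpr ⟨v, hv.1, by
          have := hv.2
          simp only [nrm, Prod.fst_sub, Prod.snd_sub] at this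
          rw [hf]; exact this⟩
    have hBcard : B.card + 1 ≤ (E.image f).card := by
      have h0B : (0:F) ∉ B := by
        rw [hB]
        simp
      have := Finset.card_le_card hBsub
      rw [Finset.card_insert_of_notMem h0B] at this
      omega
    -- spheres around e with radius in A avoid E
    have hsph : ∀ t ∈ A, ∀ x : F × F, nrm (x - e) = t → x ∉ E := by
      intro t ht x hx hxE
      rw [hA, Finset.mem_filter] at ht
      have hnz := ht.2
      simp only [nu] at hnz
      have : x ∈ E.filter (fun v => nrm (v - e) = t) := Finset.mem_filter.mpr ⟨hxE, hx⟩
      rw [Finset.card_eq_zero.mp hnz] at this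
      exact absurd this (Finset.notMem_empty x)
    have hdisj : (A : Set F).PairwiseDisjoint
        (fun t => univ.filter fun x : F × F => nrm (x - e) = t) := by
      intro s _ t _ hst
      refine Finset.disjoint_left.mpr ?_
      intro x hxs hxt
      rw [Finset.mem_filter] at hxs hxt
      exact hst (hxs.2.symm.trans hxt.2)
    have hsub2 : (A.biUnion fun t => univ.filter fun x : F × F => nrm (x - e) = t)
        ⊆ univ \ E := by
      intro x hx
      obtain ⟨t, ht, hxt⟩ := Finset.mem_biUnion.mp hx
      rw [Finset.mem_filter] at hxt
      exact Finset.mem_sdiff.mpr ⟨mem_univ _, hsph t ht x hxt.2⟩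
    have hunion : ∑ t ∈ A, (univ.filter fun x : F × F => nrm (x - e) = t).card
        ≤ (univ \ E).card := by
      rw [← Finset.card_biUnion hdisj]
      exact Finset.card_le_card hsub2
    have hsphlb : ∀ t ∈ A, q ≤ (univ.filter fun x : F × F => nrm (x - e) = t).card + 1 := by
      intro t ht
      rw [sphere_center_card e t]
      have ht0 : t ≠ 0 := Finset.ne_of_mem_erase (Finset.mem_of_mem_filter t (hA ▸ ht))
      have := sph_card_ge (F := F) (by rw [hq]; exact hoddm) ht0
      rw [hq] at this
      exact this
    have hAlb : A.card * (q - 1) ≤ (univ \ E).card := by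
      refine le_trans ?_ hunion
      calc A.card * (q-1) = ∑ _t ∈ A, (q-1) := by rw [Finset.sum_const, smul_eq_mul]
        _ ≤ _ := Finset.sum_le_sum (fun t ht => by have := hsphlb t ht; omega)
    have hA2 : q + 1 ≤ 2 * A.card := by omega
    have hcompl : (univ \ E).card + E.card = q * q := by
      rw [Finset.card_sdiff_add_card_eq_card (Finset.subset_univ E), Finset.card_univ,
        Fintype.card_prod, hq]
    have hQQ : q * q = q^2 := by ring
    have h1 : (q+1)*(q-1) ≤ 2 * (univ \ E).card := by
      calc (q+1)*(q-1) ≤ (2*A.card)*(q-1) := Nat.mul_le_mul_right _ hA2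
        _ = 2*(A.card*(q-1)) := by ring
        _ ≤ 2 * (univ \ E).card := by omega
    have h2 : q^2 ≤ (q+1)*(q-1) + 1 := by
      obtain ⟨m, hm⟩ : ∃ m, q = m + 1 := ⟨q - 1, by omega⟩
      rw [hm]
      simp only [Nat.add_sub_cancel]
      nlinarith
    have hfin : 2 * E.card ≤ q^2 + 1 := by omega
    have hsq2 : (2*E.card)^2 ≤ (q^2+1)^2 := Nat.pow_le_pow_left hfin 2
    have hq4 : q^4 ≤ 16 * q^3 := by
      calc q^4 = q * q^3 := by ring
        _ ≤ 16 * q^3 := Nat.mul_le_mul_right _ hq16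
    have hq23 : q^2 ≤ q^3 := Nat.pow_le_pow_right (by omega) (by omega)
    nlinarith [hE2, hsq2, hq4, hq23]
  -- CASE B : large q, second moment argument
  · set e0 : Finset F := univ.erase (0:F) with he0
    set qR : ℝ := (q : ℝ) with hqR
    set ER : ℝ := (E.card : ℝ) with hERdef
    have hqR17 : (17:ℝ) ≤ qR := by rw [hqR]; exact_mod_cast hq17
    have hqRpos : (0:ℝ) < qR := by linarith
    have hER1 : (1:ℝ) ≤ ER := by rw [hERdef]; exact_mod_cast hEpos
    set M : F → ℝ := fun t => ER * ((sph t).card : ℝ) / qR^2 with hM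
    set W : ℝ := ∑ u : F × F, ∑ t ∈ e0, ((nu E u t : ℝ) - M t)^2 with hWdef
    have hnu_sumR : ∀ t : F, ∑ u : F × F, (nu E u t : ℝ) = ER * ((sph t).card : ℝ) := by
      intro t
      have := congrArg (Nat.cast : ℕ → ℝ) (nu_sum E t)
      push_cast at this
      exact this
    have hpert : ∀ t : F, ∑ u : F × F, ((nu E u t : ℝ) - M t)^2
        = (∑ u : F × F, ((nu E u t : ℝ))^2) - ER^2 * ((sph t).card:ℝ)^2 / qR^2 := by
      intro t
      have hexp : ∀ u : F × F, ((nu E u t : ℝ) - M t)^2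
          = ((nu E u t:ℝ))^2 - 2 * M t * (nu E u t:ℝ) + (M t)^2 := fun u => by ring
      rw [Finset.sum_congr rfl (fun u _ => hexp u), Finset.sum_add_distrib,
        Finset.sum_sub_distrib, ← Finset.mul_sum, Finset.sum_const, hnu_sumR t,
        Finset.card_univ]
      have hns : (Fintype.card (F × F)) • (M t)^2 = qR^2 * (M t)^2 := by
        rw [nsmul_eq_mul]
        congr 1
        rw [Fintype.card_prod, hq, hqR]
        push_cast
        ring
      rw [hns, hM]
      field_simp
      ring
    have hsw : W = ∑ t ∈ e0, ∑ u : F × F, ((nu E u t : ℝ) - M t)^2 := by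
      rw [hWdef]; exact Finset.sum_comm
    have hsge : ∀ t ∈ e0, qR - 1 ≤ ((sph t).card : ℝ) := by
      intro t ht
      have ht0 : t ≠ 0 := Finset.ne_of_mem_erase ht
      have hh := sph_card_ge (F := F) (by rw [hq]; exact hoddm) ht0
      rw [hq] at hh
      have : (q:ℝ) ≤ ((sph t).card:ℝ) + 1 := by exact_mod_cast hh
      rw [hqR]; linarith
    have hsum_nu2_le : ∑ t ∈ e0, ∑ u : F × F, ((nu E u t:ℝ))^2
        ≤ ER * qR^2 + ER*(ER-1)*qR := by
      have hh1 : ∑ t ∈ e0, ∑ u : F × F, ((nu E u t:ℝ))^2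
          ≤ ∑ t : F, ∑ u : F × F, ((nu E u t:ℝ))^2 :=
        Finset.sum_le_sum_of_subset_of_nonneg (Finset.subset_univ e0)
          (fun _ _ _ => by positivity)
      have hh2 : ∑ t : F, ∑ u : F × F, ((nu E u t:ℝ))^2 = ER * qR^2 + ER*(ER-1)*qR := by
        rw [Finset.sum_comm]
        have hnat := nu_sq_sum h2F E
        rw [hq] at hnat
        have hcast := congrArg (Nat.cast : ℕ → ℝ) hnat
        push_cast [Nat.cast_sub hEpos] at hcast
        rw [hERdef, hqR]
        convert hcast using 2
      linarith
    have hs2 : (qR - 1)^3 ≤ ∑ t ∈ e0, ((sph t).card:ℝ)^2 := by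
      have hterm : ∀ t ∈ e0, (qR-1)^2 ≤ ((sph t).card:ℝ)^2 := by
        intro t ht
        have h0 : (0:ℝ) ≤ qR - 1 := by linarith
        nlinarith [hsge t ht]
      have hcs := Finset.card_nsmul_le_sum e0 _ _ hterm
      have hce0 : (e0.card : ℝ) = qR - 1 := by
        rw [he0, Finset.card_erase_of_mem (mem_univ _), Finset.card_univ, hq, hqR]
        push_cast [Nat.cast_sub hq1]
        ring
      rw [nsmul_eq_mul, hce0] at hcs
      calc (qR-1)^3 = (qR-1) * (qR-1)^2 := by ring
        _ ≤ _ := hcs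
    have hupper : W ≤ ER*qR^2 + ER*(ER-1)*qR - ER^2*(qR-1)^3/qR^2 := by
      rw [hsw, Finset.sum_congr rfl (fun t _ => hpert t), Finset.sum_sub_distrib]
      have hfac : ∑ t ∈ e0, ER^2 * ((sph t).card:ℝ)^2 / qR^2
          = ER^2/qR^2 * ∑ t ∈ e0, ((sph t).card:ℝ)^2 := by
        rw [Finset.mul_sum]
        exact Finset.sum_congr rfl (fun t _ => by ring)
      rw [hfac]
      have hcoef : (0:ℝ) ≤ ER^2/qR^2 := by positivity
      have := mul_le_mul_of_nonneg_left hs2 hcoef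
      have heq : ER^2*(qR-1)^3/qR^2 = ER^2/qR^2 * (qR-1)^3 := by ring
      rw [heq]
      linarith
    have hlower : ER * ((qR-1)/2) * (ER*(qR-1)/qR^2)^2 ≤ W := by
      set c : ℝ := ER*(qR-1)/qR^2 with hc
      have hc0 : (0:ℝ) ≤ c := by
        rw [hc]
        apply div_nonneg (mul_nonneg (by linarith) (by linarith)) (by positivity)
      have hperu : ∀ u ∈ E, ((qR-1)/2) * c^2 ≤ ∑ t ∈ e0, ((nu E u t : ℝ) - M t)^2 := by
        intro u hu
        set Au := e0.filter (fun t => nu E u t = 0) with hAu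
        have hh1 : ∑ t ∈ Au, ((nu E u t:ℝ) - M t)^2 ≤ ∑ t ∈ e0, ((nu E u t:ℝ) - M t)^2 :=
          Finset.sum_le_sum_of_subset_of_nonneg (Finset.filter_subset _ _)
            (fun _ _ _ => by positivity)
        have hh2 : ∀ t ∈ Au, c^2 ≤ ((nu E u t:ℝ) - M t)^2 := by
          intro t ht
          rw [hAu, Finset.mem_filter] at ht
          have ht0 : t ∈ e0 := ht.1
          have hMt : c ≤ M t := by
            rw [hM, hc]
            have h3 : (0:ℝ) < qR^2 := by positivity
            exact (div_le_div_iff_of_pos_right h3).mpr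
              (mul_le_mul_of_nonneg_left (hsge t ht0) (by linarith))
          rw [ht.2]
          push_cast
          nlinarith [hc0, hMt]
        have hAucard : (qR - 1)/2 ≤ (Au.card : ℝ) := by
          have hnn := hmiss u hu
          have hcast : ((q-1:ℕ):ℝ) ≤ ((2*Au.card:ℕ):ℝ) := Nat.cast_le.mpr hnn
          push_cast [Nat.cast_sub hq1] at hcast
          rw [hqR]
          linarith
        calc ((qR-1)/2)*c^2 ≤ (Au.card:ℝ)*c^2 := by nlinarith [sq_nonneg c]
          _ = ∑ _t ∈ Au, c^2 := by rw [Finset.sum_const, nsmul_eq_mul]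
          _ ≤ ∑ t ∈ Au, ((nu E u t:ℝ) - M t)^2 := Finset.sum_le_sum hh2
          _ ≤ _ := hh1
      have hcs := Finset.card_nsmul_le_sum E _ _ hperu
      rw [nsmul_eq_mul] at hcs
      have hEsub : ∑ u ∈ E, ∑ t ∈ e0, ((nu E u t : ℝ) - M t)^2 ≤ W := by
        rw [hWdef]
        exact Finset.sum_le_sum_of_subset_of_nonneg (Finset.subset_univ E)
          (fun _ _ _ => by positivity)
      calc ER * ((qR-1)/2) * c^2 = ER * (((qR-1)/2) * c^2) := by ring
        _ ≤ ∑ u ∈ E, ∑ t ∈ e0, ((nu E u t : ℝ) - M t)^2 := by rw [hERdef]; exact hcs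
        _ ≤ W := hEsub
    have hx2 : 8*qR^3 + 1 ≤ ER^2 := by
      have hcast : ((8*q^3+1:ℕ):ℝ) ≤ ((E.card^2:ℕ):ℝ) := Nat.cast_le.mpr hE2
      push_cast at hcast
      rw [hqR, hERdef]
      linarith
    have harith := arith_final qR ER hqR17 hER1 hx2
    linarith [hlower, hupper, harith]
end

section
/- Let d ≥ 2, z ∈ 𝔽_q \ {0}, and A ⊆ 𝔽_q with |A| > q^{d/(2d−1)}. Then there exist a₁, …, a_{d−1} ∈ A such that |a₁A + a₂A + ⋯ + a_{d−1}A + zA| > q/2. -/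
open Finset

/-- Fibers of a nonzero linear form all have the same cardinality. -/
lemma linear_fiber_card_eq {F : Type*} [Field F] [Fintype F] [DecidableEq F] {n : ℕ}
    (u : Fin n → F) (i : Fin n) (hi : u i ≠ 0) (c c' : F) :
    ((Finset.univ : Finset (Fin n → F)).filter (fun v => ∑ j, v j * u j = c)).card
      = ((Finset.univ : Finset (Fin n → F)).filter (fun v => ∑ j, v j * u j = c')).card := by
  have hkey : ∀ (v : Fin n → F) (w : F),
      ∑ j, (Function.update v i w) j * u j = w * u i + ∑ j ∈ Finset.univ \ {i}, v j * u j := by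
    intro v w
    have : (fun j => (Function.update v i w) j * u j)
        = Function.update (fun j => v j * u j) i (w * u i) := by
      funext j
      rcases eq_or_ne j i with rfl | hj
      · simp
      · simp [Function.update_of_ne hj]
    rw [this, Finset.sum_update_of_mem (Finset.mem_univ i)]
  have hsum : ∀ v : Fin n → F,
      ∑ j, v j * u j = v i * u i + ∑ j ∈ Finset.univ \ {i}, v j * u j :=
    fun v => Finset.sum_eq_add_sum_sdiff_singleton_of_mem (Finset.mem_univ i) _
  refine Finset.card_bij' (fun v _ => Function.update v i (v i + (c' - c) * (u i)⁻¹))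
    (fun v _ => Function.update v i (v i + (c - c') * (u i)⁻¹)) ?_ ?_ ?_ ?_
  · intro v hv
    simp only [Finset.mem_filter, Finset.mem_univ, true_and] at hv ⊢
    rw [hkey]
    rw [hsum v] at hv
    field_simp
    linear_combination hv
  · intro v hv
    simp only [Finset.mem_filter, Finset.mem_univ, true_and] at hv ⊢
    rw [hkey]
    rw [hsum v] at hv
    field_simp
    linear_combination hv
  · intro v hv
    simp only [Function.update_idem, Function.update_self]
    rw [show v i + (c' - c) * (u i)⁻¹ + (c - c') * (u i)⁻¹ = v i by ring]
    exact Function.update_eq_self i v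
  · intro v hv
    simp only [Function.update_idem, Function.update_self]
    rw [show v i + (c - c') * (u i)⁻¹ + (c' - c) * (u i)⁻¹ = v i by ring]
    exact Function.update_eq_self i v

/-- A nonzero linear form on `F^n` has all fibers of size `q^(n-1)`. -/
lemma linear_fiber_card {F : Type*} [Field F] [Fintype F] [DecidableEq F] {n : ℕ}
    (u : Fin n → F) (i : Fin n) (hi : u i ≠ 0) (c : F) :
    ((Finset.univ : Finset (Fin n → F)).filter (fun v => ∑ j, v j * u j = c)).card
      = Fintype.card F ^ (n - 1) := by
  have hq : 0 < Fintype.card F := Fintype.card_pos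
  have hn : n - 1 + 1 = n := Nat.succ_pred_eq_of_pos i.pos
  have htot : Fintype.card F * ((Finset.univ : Finset (Fin n → F)).filter
      (fun v => ∑ j, v j * u j = c)).card = Fintype.card F ^ n := by
    have := Finset.card_eq_sum_card_fiberwise
      (f := fun v : Fin n → F => ∑ j, v j * u j) (s := Finset.univ) (t := Finset.univ)
      (fun x _ => Finset.mem_univ _)
    rw [Finset.card_univ, Fintype.card_pi_const] at this
    rw [this, Finset.sum_congr rfl (fun c' _ => linear_fiber_card_eq u i hi c' c),
      Finset.sum_const, Finset.card_univ, smul_eq_mul]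
  have : Fintype.card F * ((Finset.univ : Finset (Fin n → F)).filter
      (fun v => ∑ j, v j * u j = c)).card = Fintype.card F * Fintype.card F ^ (n - 1) := by
    rw [htot, ← pow_succ', hn]
  exact Nat.eq_of_mul_eq_mul_left hq this

/-- The pinned linear map `b ↦ ∑ᵢ vᵢ bᵢ + z b_last`. -/
def pinnedPhi {F : Type*} [Field F] {n : ℕ} (z : F) (v : Fin n → F) (b : Fin (n + 1) → F) : F :=
  (∑ i : Fin n, v i * b i.castSucc) + z * b (Fin.last n)

/-- Sum of squares of fiber sizes equals the number of collision pairs. -/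
lemma sum_sq_card_fiber {α β : Type*} [DecidableEq α] [DecidableEq β] [Fintype β]
    (D : Finset α) (f : α → β) :
    ∑ t : β, ((D.filter fun b => f b = t).card) ^ 2
      = ((D ×ˢ D).filter fun p => f p.1 = f p.2).card := by
  rw [Finset.card_eq_sum_card_fiberwise
    (f := fun p : α × α => f p.1) (t := Finset.univ) (fun x _ => Finset.mem_univ _)]
  refine Finset.sum_congr rfl fun t _ => ?_
  rw [Finset.filter_filter]
  have : ((D ×ˢ D).filter fun p => f p.1 = f p.2 ∧ f p.1 = t)
      = (D.filter fun b => f b = t) ×ˢ (D.filter fun b => f b = t) := by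
    ext ⟨b, b'⟩
    simp only [Finset.mem_filter, Finset.mem_product]
    constructor
    · rintro ⟨⟨hb, hb'⟩, heq, ht⟩
      exact ⟨⟨hb, ht⟩, hb', heq ▸ ht⟩
    · rintro ⟨⟨hb, ht⟩, hb', ht'⟩
      exact ⟨⟨hb, hb'⟩, ht.trans ht'.symm, ht⟩
  rw [this, Finset.card_product]
  ring

/-- For fixed `b ≠ b'`, the number of `v` with `φ_v b = φ_v b'` is at most `q^(n-1)`. -/
lemma count_v_le {F : Type*} [Field F] [Fintype F] [DecidableEq F] {n : ℕ}
    (z : F) (hz : z ≠ 0) (b b' : Fin (n + 1) → F) (hbb' : b ≠ b') :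
    ((Finset.univ : Finset (Fin n → F)).filter
        (fun v => pinnedPhi z v b = pinnedPhi z v b')).card
      ≤ Fintype.card F ^ (n - 1) := by
  set u : Fin n → F := fun j => b j.castSucc - b' j.castSucc with hu
  set c : F := z * (b' (Fin.last n) - b (Fin.last n)) with hc
  have hpred : ∀ v : Fin n → F,
      (pinnedPhi z v b = pinnedPhi z v b') ↔ (∑ j, v j * u j = c) := by
    intro v
    have hsum : ∑ j, v j * u j
        = (∑ j, v j * b j.castSucc) - ∑ j, v j * b' j.castSucc := by
      rw [← Finset.sum_sub_distrib]
      exact Finset.sum_congr rfl fun j _ => by rw [hu]; ring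
    rw [pinnedPhi, pinnedPhi, hsum, hc]
    constructor
    · intro hEq; linear_combination hEq
    · intro hEq; linear_combination hEq
  rw [Finset.filter_congr (fun v _ => hpred v)]
  by_cases hzero : ∀ j, u j = 0
  · have hlast : b (Fin.last n) ≠ b' (Fin.last n) := by
      intro hL
      apply hbb'
      funext j
      refine Fin.lastCases hL (fun i => ?_) j
      have := hzero i
      rw [hu] at this
      exact sub_eq_zero.mp this
    have hcne : c ≠ 0 := by
      rw [hc]
      exact mul_ne_zero hz (sub_ne_zero_of_ne (Ne.symm hlast))
    have : ((Finset.univ : Finset (Fin n → F)).filter (fun v => ∑ j, v j * u j = c)) = ∅ := by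
      refine Finset.filter_false_of_mem fun v _ => ?_
      rw [Finset.sum_congr rfl (fun j _ => by rw [hzero j, mul_zero]), Finset.sum_const_zero]
      exact fun h0 => hcne h0.symm
    simp [this]
  · push_neg at hzero
    obtain ⟨i, hi⟩ := hzero
    exact le_of_eq (linear_fiber_card u i hi c)

/-- Spectral-type bound: total collision count over all pencils of parallel hyperplanes. -/
lemma sum_energy_bound {F : Type*} [Field F] [Fintype F] [DecidableEq F] {n : ℕ}
    (z : F) (hz : z ≠ 0) (D : Finset (Fin (n + 1) → F)) :
    ∑ v : Fin n → F, ((D ×ˢ D).filter fun p => pinnedPhi z v p.1 = pinnedPhi z v p.2).card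
      ≤ Fintype.card F ^ n * D.card + Fintype.card F ^ (n - 1) * D.card ^ 2 := by
  have hswap : ∑ v : Fin n → F,
        ((D ×ˢ D).filter fun p => pinnedPhi z v p.1 = pinnedPhi z v p.2).card
      = ∑ p ∈ D ×ˢ D, ((Finset.univ : Finset (Fin n → F)).filter
          (fun v => pinnedPhi z v p.1 = pinnedPhi z v p.2)).card := by
    simp_rw [Finset.card_filter]
    exact Finset.sum_comm
  rw [hswap]
  calc ∑ p ∈ D ×ˢ D, ((Finset.univ : Finset (Fin n → F)).filter
          (fun v => pinnedPhi z v p.1 = pinnedPhi z v p.2)).card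
      ≤ ∑ p ∈ D ×ˢ D, (if p.1 = p.2 then Fintype.card F ^ n else Fintype.card F ^ (n - 1)) := by
        refine Finset.sum_le_sum fun p _ => ?_
        by_cases hp : p.1 = p.2
        · rw [if_pos hp]
          calc _ ≤ (Finset.univ : Finset (Fin n → F)).card := Finset.card_filter_le _ _
            _ = Fintype.card F ^ n := by rw [Finset.card_univ, Fintype.card_pi_const]
        · rw [if_neg hp]
          exact count_v_le z hz p.1 p.2 hp
    _ ≤ Fintype.card F ^ n * D.card + Fintype.card F ^ (n - 1) * D.card ^ 2 := by
        rw [Finset.sum_ite]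
        gcongr
        · calc ∑ _p ∈ (D ×ˢ D).filter (fun p => p.1 = p.2), Fintype.card F ^ n
              = ((D ×ˢ D).filter (fun p => p.1 = p.2)).card * Fintype.card F ^ n := by
                rw [Finset.sum_const, smul_eq_mul]
            _ ≤ D.card * Fintype.card F ^ n := by
                gcongr
                refine Finset.card_le_card_of_injOn Prod.fst
                  (fun p hp => (Finset.mem_product.mp (Finset.mem_filter.mp hp).1).1) ?_
                intro p hp p' hp' hpp'
                have h1 := (Finset.mem_filter.mp hp).2
                have h2 := (Finset.mem_filter.mp hp').2
                exact Prod.ext hpp' (by rw [← h1, ← h2, hpp'])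
            _ = Fintype.card F ^ n * D.card := mul_comm _ _
        · calc ∑ _p ∈ (D ×ˢ D).filter (fun p => ¬p.1 = p.2), Fintype.card F ^ (n - 1)
              = ((D ×ˢ D).filter (fun p => ¬p.1 = p.2)).card * Fintype.card F ^ (n - 1) := by
                rw [Finset.sum_const, smul_eq_mul]
            _ ≤ (D.card * D.card) * Fintype.card F ^ (n - 1) := by
                gcongr
                calc _ ≤ (D ×ˢ D).card := Finset.card_filter_le _ _
                  _ = D.card * D.card := Finset.card_product _ _
            _ = Fintype.card F ^ (n - 1) * D.card ^ 2 := by ring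

set_option maxHeartbeats 2000000 in
/-- Higher-dimensional pinned sums: the dimension is `d = n + 1` with `n ≥ 1`, so `d ≥ 2`
and `d / (2d - 1) = (n + 1) / (2n + 1)`.  The set `a₁A + ⋯ + a_{d-1}A + zA` is the image
of `A^d` under `b ↦ ∑ i, aᵢ bᵢ + z b_d`. -/
theorem pinned_sums_higher_dim
    {F : Type*} [Field F] [Fintype F] [DecidableEq F] (q : ℕ) (hq : Fintype.card F = q)
    (n : ℕ) (hn : 1 ≤ n) (z : F) (hz : z ≠ 0) (A : Finset F)
    (h : (A.card : ℝ) > (q : ℝ) ^ (((n : ℝ) + 1) / (2 * (n : ℝ) + 1))) :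
    ∃ a : Fin n → F, (∀ i, a i ∈ A) ∧
      (((Fintype.piFinset fun _ : Fin (n + 1) => A).image
          (fun b : Fin (n + 1) → F =>
            (∑ i : Fin n, a i * b i.castSucc) + z * b (Fin.last n))).card : ℝ)
        > (q : ℝ) / 2 := by
  classical
  obtain ⟨m, rfl⟩ : ∃ m, n = m + 1 := ⟨n - 1, (Nat.succ_pred_eq_of_pos hn).symm⟩
  have hq1 : 1 ≤ q := hq ▸ Fintype.card_pos
  have hQ0 : (0:ℝ) < (q:ℝ) := by exact_mod_cast Nat.lt_of_lt_of_le Nat.zero_lt_one hq1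
  have hQ1 : (1:ℝ) ≤ (q:ℝ) := by exact_mod_cast hq1
  -- A is nonempty
  have hA0 : 0 < A.card := by
    have h1 : (1:ℝ) ≤ (q:ℝ) ^ ((((m:ℝ)+1) + 1) / (2 * ((m:ℝ)+1) + 1)) :=
      Real.one_le_rpow hQ1 (by positivity)
    have h2 : (0:ℝ) < (A.card : ℝ) := by
      push_cast at h
      nlinarith [h, h1]
    exact_mod_cast h2
  have haR0 : (0:ℝ) < (A.card : ℝ) := by exact_mod_cast hA0
  -- the key power inequality
  have key : ((q:ℝ)) ^ (m + 2) < (A.card : ℝ) ^ (2 * m + 3) := by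
    set e : ℝ := ((((m+1:ℕ)):ℝ) + 1) / (2 * (((m+1:ℕ)):ℝ) + 1) with he
    have hD : (0:ℝ) < 2 * (((m+1:ℕ)):ℝ) + 1 := by positivity
    have h1 : ((q:ℝ) ^ e) ^ (2 * (((m+1:ℕ)):ℝ) + 1)
        < (A.card : ℝ) ^ (2 * (((m+1:ℕ)):ℝ) + 1) :=
      Real.rpow_lt_rpow (Real.rpow_nonneg hQ0.le _) h hD
    have hL : ((q:ℝ) ^ e) ^ (2 * (((m+1:ℕ)):ℝ) + 1) = (q:ℝ) ^ (m + 2 : ℕ) := by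
      rw [← Real.rpow_natCast (q:ℝ) (m+2), ← Real.rpow_mul hQ0.le]
      congr 1
      rw [he]
      have hDne : 2 * (((m+1:ℕ)):ℝ) + 1 ≠ 0 := ne_of_gt hD
      field_simp
      push_cast
      ring
    have hR : (A.card : ℝ) ^ (2 * (((m+1:ℕ)):ℝ) + 1) = (A.card : ℝ) ^ (2 * m + 3 : ℕ) := by
      rw [← Real.rpow_natCast (A.card : ℝ) (2*m+3)]
      congr 1
      push_cast
      ring
    rw [hL, hR] at h1
    exact h1
  -- set up the counting apparatus
  set D : Finset (Fin (m + 1 + 1) → F) := Fintype.piFinset fun _ => A with hDdef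
  have hDcard : D.card = A.card ^ (m + 2) := by
    rw [hDdef, Fintype.card_piFinset_const]
  have hDcR : (D.card : ℝ) = (A.card : ℝ) ^ (m + 2) := by rw [hDcard]; push_cast; ring
  set r : (Fin (m + 1) → F) → F → ℕ :=
    fun v t => (D.filter fun b => pinnedPhi z v b = t).card with hrdef
  set E : (Fin (m + 1) → F) → ℕ :=
    fun v => ((D ×ˢ D).filter fun p => pinnedPhi z v p.1 = pinnedPhi z v p.2).card with hEdef
  have hsum_r : ∀ v, ∑ t : F, (r v t : ℝ) = (D.card : ℝ) := by
    intro v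
    have := Finset.card_eq_sum_card_fiberwise
      (f := pinnedPhi z v) (s := D) (t := Finset.univ) (fun x _ => Finset.mem_univ _)
    rw [hrdef]
    exact_mod_cast this.symm
  have hsum_r2 : ∀ v, ∑ t : F, (r v t : ℝ) ^ 2 = (E v : ℝ) := by
    intro v
    have := sum_sq_card_fiber D (pinnedPhi z v)
    rw [hrdef, hEdef]
    exact_mod_cast this
  -- centered second moment
  have hcentered : ∀ v, ∑ t : F, ((r v t : ℝ) - (D.card : ℝ) / q) ^ 2
      = (E v : ℝ) - (D.card : ℝ) ^ 2 / q := by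
    intro v
    have e1 : ∀ t : F, ((r v t : ℝ) - (D.card : ℝ) / q) ^ 2
        = (r v t : ℝ) ^ 2 - (2 * (D.card : ℝ) / q) * (r v t : ℝ) + ((D.card : ℝ) / q) ^ 2 :=
      fun t => by ring
    rw [Finset.sum_congr rfl fun t _ => e1 t, Finset.sum_add_distrib, Finset.sum_sub_distrib,
      ← Finset.mul_sum, Finset.sum_const, Finset.card_univ, hq, hsum_r v, hsum_r2 v,
      nsmul_eq_mul]
    field_simp
    ring
  have hnonneg : ∀ v, (0:ℝ) ≤ (E v : ℝ) - (D.card : ℝ) ^ 2 / q := by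
    intro v
    rw [← hcentered v]
    exact Finset.sum_nonneg fun t _ => sq_nonneg _
  -- averaged bound over a ∈ A^n
  set piA : Finset (Fin (m + 1) → F) := Fintype.piFinset fun _ => A with hpiAdef
  have hpiAcard : piA.card = A.card ^ (m + 1) := by rw [hpiAdef, Fintype.card_piFinset_const]
  have hpiAne : piA.Nonempty := Finset.card_pos.mp (by rw [hpiAcard]; exact pow_pos hA0 _)
  have havg : ∑ a ∈ piA, ((E a : ℝ) - (D.card : ℝ) ^ 2 / q)
      ≤ (q:ℝ) ^ (m + 1) * (D.card : ℝ) := by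
    have hsub : ∑ a ∈ piA, ((E a : ℝ) - (D.card : ℝ) ^ 2 / q)
        ≤ ∑ v : Fin (m + 1) → F, ((E v : ℝ) - (D.card : ℝ) ^ 2 / q) :=
      Finset.sum_le_sum_of_subset_of_nonneg (Finset.subset_univ _) fun v _ _ => hnonneg v
    have hE : ∑ v : Fin (m + 1) → F, (E v : ℝ)
        ≤ (q:ℝ) ^ (m + 1) * (D.card : ℝ) + (q:ℝ) ^ m * (D.card : ℝ) ^ 2 := by
      have hEn := sum_energy_bound (n := m + 1) z hz D
      rw [hq] at hEn
      simp only [Nat.add_sub_cancel] at hEn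
      have := (Nat.cast_le (α := ℝ)).mpr hEn
      push_cast at this
      rw [hEdef]
      exact_mod_cast this
    have hconst : ∑ v : Fin (m + 1) → F, ((E v : ℝ) - (D.card : ℝ) ^ 2 / q)
        = (∑ v : Fin (m + 1) → F, (E v : ℝ)) - (q:ℝ) ^ (m + 1) * ((D.card : ℝ) ^ 2 / q) := by
      rw [Finset.sum_sub_distrib, Finset.sum_const, Finset.card_univ, Fintype.card_pi_const,
        hq, nsmul_eq_mul]
      push_cast
      ring
    have hfin : (q:ℝ) ^ (m + 1) * (D.card : ℝ) + (q:ℝ) ^ m * (D.card : ℝ) ^ 2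
        - (q:ℝ) ^ (m + 1) * ((D.card : ℝ) ^ 2 / q) = (q:ℝ) ^ (m + 1) * (D.card : ℝ) := by
      field_simp
      ring
    calc ∑ a ∈ piA, ((E a : ℝ) - (D.card : ℝ) ^ 2 / q)
        ≤ ∑ v : Fin (m + 1) → F, ((E v : ℝ) - (D.card : ℝ) ^ 2 / q) := hsub
      _ = (∑ v : Fin (m + 1) → F, (E v : ℝ)) - (q:ℝ) ^ (m + 1) * ((D.card : ℝ) ^ 2 / q) :=
          hconst
      _ ≤ (q:ℝ) ^ (m + 1) * (D.card : ℝ) + (q:ℝ) ^ m * (D.card : ℝ) ^ 2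
          - (q:ℝ) ^ (m + 1) * ((D.card : ℝ) ^ 2 / q) := by linarith [hE]
      _ = (q:ℝ) ^ (m + 1) * (D.card : ℝ) := hfin
  -- pick a good pin a
  have havg2 : ∑ a ∈ piA, ((E a : ℝ) - (D.card : ℝ) ^ 2 / q)
      ≤ ∑ _a ∈ piA, ((q:ℝ) ^ (m + 1) * (D.card : ℝ) / (A.card : ℝ) ^ (m + 1)) := by
    rw [Finset.sum_const, nsmul_eq_mul, hpiAcard]
    have hAm : ((A.card ^ (m + 1) : ℕ) : ℝ) = (A.card : ℝ) ^ (m + 1) := by push_cast; ring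
    rw [hAm, mul_div_cancel₀ _ (by positivity : ((A.card : ℝ) ^ (m + 1)) ≠ 0)]
    exact havg
  obtain ⟨a, haA, haE⟩ := Finset.exists_le_of_sum_le hpiAne havg2
  refine ⟨a, fun i => (Fintype.mem_piFinset.mp haA) i, ?_⟩
  -- Cauchy–Schwarz on the image
  show (((D.image (pinnedPhi z a))).card : ℝ) > (q:ℝ) / 2
  set S : Finset F := D.image (pinnedPhi z a) with hSdef
  have hfiber : ∑ t ∈ S, (r a t : ℝ) = (D.card : ℝ) := by
    have := Finset.card_eq_sum_card_fiberwise
      (f := pinnedPhi z a) (s := D) (t := S) (fun x hx => Finset.mem_image_of_mem _ hx)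
    rw [hrdef]
    exact_mod_cast this.symm
  have hsuble : ∑ t ∈ S, (r a t : ℝ) ^ 2 ≤ (E a : ℝ) := by
    rw [← hsum_r2 a]
    exact Finset.sum_le_sum_of_subset_of_nonneg (Finset.subset_univ _)
      fun t _ _ => sq_nonneg _
  have hcs : (D.card : ℝ) ^ 2 ≤ (E a : ℝ) * (S.card : ℝ) := by
    have h2 := Finset.sum_mul_sq_le_sq_mul_sq S (fun t => (r a t : ℝ)) (fun _ => (1:ℝ))
    simp only [mul_one, one_pow] at h2
    rw [hfiber, Finset.sum_const, nsmul_eq_mul, mul_one] at h2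
    calc (D.card : ℝ) ^ 2 ≤ (∑ t ∈ S, (r a t : ℝ) ^ 2) * (S.card : ℝ) := h2
      _ ≤ (E a : ℝ) * (S.card : ℝ) := by
          have hS0 : (0:ℝ) ≤ (S.card : ℝ) := Nat.cast_nonneg _
          nlinarith [hsuble, hS0]
  -- final arithmetic
  have hEa : (E a : ℝ) ≤ (D.card : ℝ) ^ 2 / q
      + (q:ℝ) ^ (m + 1) * (D.card : ℝ) / (A.card : ℝ) ^ (m + 1) := by linarith [haE]
  have hP0 : (0:ℝ) < (D.card : ℝ) := by rw [hDcR]; positivity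
  have haRn : (0:ℝ) < (A.card : ℝ) ^ (m + 1) := by positivity
  have hEa2 : (q:ℝ) * (A.card : ℝ) ^ (m + 1) * (E a : ℝ)
      ≤ (A.card : ℝ) ^ (m + 1) * (D.card : ℝ) ^ 2 + (q:ℝ) ^ (m + 2) * (D.card : ℝ) := by
    have hmul := mul_le_mul_of_nonneg_left hEa
      (by positivity : (0:ℝ) ≤ (q:ℝ) * (A.card : ℝ) ^ (m + 1))
    calc (q:ℝ) * (A.card : ℝ) ^ (m + 1) * (E a : ℝ)
        ≤ (q:ℝ) * (A.card : ℝ) ^ (m + 1) * ((D.card : ℝ) ^ 2 / q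
          + (q:ℝ) ^ (m + 1) * (D.card : ℝ) / (A.card : ℝ) ^ (m + 1)) := hmul
      _ = (A.card : ℝ) ^ (m + 1) * (D.card : ℝ) ^ 2 + (q:ℝ) ^ (m + 2) * (D.card : ℝ) := by
          field_simp
          ring
  have hkey2 : (q:ℝ) ^ (m + 2) * (D.card : ℝ)
      < (A.card : ℝ) ^ (m + 1) * (D.card : ℝ) ^ 2 := by
    have h2 : (A.card : ℝ) ^ (2 * m + 3) = (A.card : ℝ) ^ (m + 1) * (D.card : ℝ) := by
      rw [hDcR, ← pow_add]
      congr 1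
      ring
    have := mul_lt_mul_of_pos_right key hP0
    rw [h2] at this
    nlinarith [this]
  have hEapos : (0:ℝ) < (E a : ℝ) := by
    rcases lt_or_ge 0 ((E a : ℝ)) with hpos | hneg
    · exact hpos
    · exfalso
      have hS0 : (0:ℝ) ≤ (S.card : ℝ) := Nat.cast_nonneg _
      nlinarith [hcs, hP0, hS0, hneg]
  have haE2 : (0:ℝ) < (A.card : ℝ) ^ (m + 1) * (E a : ℝ) := mul_pos haRn hEapos
  have hmain : (q:ℝ) * ((A.card : ℝ) ^ (m + 1) * (E a : ℝ))
      < (2 * (S.card : ℝ)) * ((A.card : ℝ) ^ (m + 1) * (E a : ℝ)) := by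
    have h2cs := mul_le_mul_of_nonneg_left hcs
      (by positivity : (0:ℝ) ≤ 2 * (A.card : ℝ) ^ (m + 1))
    nlinarith [hEa2, hkey2, h2cs]
  have hfin : (q:ℝ) < 2 * (S.card : ℝ) := (mul_lt_mul_iff_of_pos_right haE2).mp hmain
  linarith [hfin]
end
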